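/- arXiv:2306.08065 — 5 statements merged into one kernel-verified Lean document; each statement's English description precedes it below -/
import Mathlib

section
/- Let T and B be finite sets of positive integers with |T| = |B|. Then (T, B) is a descent matching if and only if for every integer n with n ≥ max(T) (n ≥ 0 arbitrary when T is empty) there exists a permutation σ ∈ S_n such that Destop(σ) = T and Desbot(σ) = B. -/
open scoped Classical

/-- The 1-based `i`-th entry of a permutation `σ` of `{1,…,n}`, as a value in `{1,…,n}`
(one-line notation `σ(1)…σ(n)`). -/
def entry {n : ℕ} (σ : Equiv.Perm (Fin n)) (i : ℕ) : ℕ :=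
  if h : i - 1 < n then (σ ⟨i - 1, h⟩ : ℕ) + 1 else 0

/-- `σ` contains the pattern `π ∈ S_k` (given in 0-based one-line notation as a function):
there is a (not necessarily consecutive) subsequence of `σ` order-isomorphic to `π`. -/
def Contains {n k : ℕ} (π : Fin k → Fin k) (σ : Equiv.Perm (Fin n)) : Prop :=
  ∃ f : Fin k → Fin n, StrictMono f ∧ ∀ i j : Fin k, π i < π j ↔ σ (f i) < σ (f j)

/-- `σ` avoids the pattern `π`. -/
def AvoidsPat {n k : ℕ} (π : Fin k → Fin k) (σ : Equiv.Perm (Fin n)) : Prop :=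
  ¬ Contains π σ

/-- The descent set of `σ` (1-based positions `i ∈ [n-1]` with `σ(i) > σ(i+1)`). -/
def Des {n : ℕ} (σ : Equiv.Perm (Fin n)) : Finset ℕ :=
  (Finset.Icc 1 (n - 1)).filter (fun i => entry σ (i + 1) < entry σ i)

/-- The descent top set of `σ`: `{σ(i) : i ∈ Des σ}`. -/
def Destop {n : ℕ} (σ : Equiv.Perm (Fin n)) : Finset ℕ :=
  (Des σ).image (entry σ)

/-- The descent bottom set of `σ`: `{σ(i+1) : i ∈ Des σ}`. -/
def Desbot {n : ℕ} (σ : Equiv.Perm (Fin n)) : Finset ℕ :=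
  (Des σ).image (fun i => entry σ (i + 1))

/-- The ascent set of `σ` (1-based positions `i ∈ [n-1]` with `σ(i) < σ(i+1)`). -/
def Asc {n : ℕ} (σ : Equiv.Perm (Fin n)) : Finset ℕ :=
  (Finset.Icc 1 (n - 1)).filter (fun i => entry σ i < entry σ (i + 1))

/-- The ascent top set of `σ`: `{σ(i+1) : i ∈ Asc σ}`. -/
def Asctop {n : ℕ} (σ : Equiv.Perm (Fin n)) : Finset ℕ :=
  (Asc σ).image (fun i => entry σ (i + 1))

/-- The ascent bottom set of `σ`: `{σ(i) : i ∈ Asc σ}`. -/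
def Ascbot {n : ℕ} (σ : Equiv.Perm (Fin n)) : Finset ℕ :=
  (Asc σ).image (entry σ)

/-- The set of peak values of `σ`. -/
def Peak {n : ℕ} (σ : Equiv.Perm (Fin n)) : Finset ℕ :=
  Destop σ ∩ Asctop σ

/-- The set of valley values of `σ`. -/
def Val {n : ℕ} (σ : Equiv.Perm (Fin n)) : Finset ℕ :=
  Desbot σ ∩ Ascbot σ

/-- The set of left-to-right maxima (as values) of `σ`. -/
noncomputable def LRmax {n : ℕ} (σ : Equiv.Perm (Fin n)) : Finset ℕ :=
  ((Finset.Icc 1 n).filter (fun i => ∀ j, 1 ≤ j → j < i → entry σ j < entry σ i)).image (entry σ)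

/-- The set of left-to-right minima (as values) of `σ`. -/
noncomputable def LRmin {n : ℕ} (σ : Equiv.Perm (Fin n)) : Finset ℕ :=
  ((Finset.Icc 1 n).filter (fun i => ∀ j, 1 ≤ j → j < i → entry σ i < entry σ j)).image (entry σ)

/-- The set of right-to-left maxima (as values) of `σ`. -/
noncomputable def RLmax {n : ℕ} (σ : Equiv.Perm (Fin n)) : Finset ℕ :=
  ((Finset.Icc 1 n).filter (fun i => ∀ j, i < j → j ≤ n → entry σ j < entry σ i)).image (entry σ)

/-- The set of right-to-left minima (as values) of `σ`. -/
noncomputable def RLmin {n : ℕ} (σ : Equiv.Perm (Fin n)) : Finset ℕ :=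
  ((Finset.Icc 1 n).filter (fun i => ∀ j, i < j → j ≤ n → entry σ i < entry σ j)).image (entry σ)

/-- `(T, B)` is a descent matching: `T` and `B` are finite sets of positive integers
with `|T| = |B| = k`, and writing `T = {t_1 < … < t_k}`, `B = {b_1 < … < b_k}`,
we have `t_i > b_i` for all `i ∈ [k]`. -/
def DescentMatching (T B : Finset ℕ) : Prop :=
  T.card = B.card ∧ (∀ t ∈ T, 0 < t) ∧ (∀ b ∈ B, 0 < b) ∧
    ∀ i < T.card, (B.sort (· ≤ ·)).getD i 0 < (T.sort (· ≤ ·)).getD i 0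

/-- `(2_v 31)σ`: the number of occurrences of the vincular pattern `2-31` in `σ`
in which the "2" has value `v`. -/
def occ2_31at {n : ℕ} (σ : Equiv.Perm (Fin n)) (v : ℕ) : ℕ :=
  ((Finset.Icc 1 (n - 1) ×ˢ Finset.Icc 1 (n - 1)).filter
    (fun p => p.1 < p.2 ∧ entry σ (p.2 + 1) < entry σ p.2 ∧
      entry σ (p.2 + 1) < entry σ p.1 ∧ entry σ p.1 = v ∧ v < entry σ p.2)).card

/-- `(31 2_v)σ`: the number of occurrences of the vincular pattern `31-2` in `σ`
in which the "2" has value `v`. -/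
def occ31_2at {n : ℕ} (σ : Equiv.Perm (Fin n)) (v : ℕ) : ℕ :=
  ((Finset.Icc 1 (n - 1) ×ˢ Finset.Icc 1 n).filter
    (fun p => p.1 + 1 < p.2 ∧ entry σ (p.1 + 1) < entry σ p.1 ∧
      entry σ (p.1 + 1) < entry σ p.2 ∧ entry σ p.2 = v ∧ v < entry σ p.1)).card

/-- `(2-31)σ`: the number of occurrences of the vincular pattern `2-31` in `σ`. -/
def occ2_31 {n : ℕ} (σ : Equiv.Perm (Fin n)) : ℕ :=
  ((Finset.Icc 1 (n - 1) ×ˢ Finset.Icc 1 (n - 1)).filter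
    (fun p => p.1 < p.2 ∧ entry σ (p.2 + 1) < entry σ p.2 ∧
      entry σ (p.2 + 1) < entry σ p.1 ∧ entry σ p.1 < entry σ p.2)).card

/-- `(31-2)σ`: the number of occurrences of the vincular pattern `31-2` in `σ`. -/
def occ31_2 {n : ℕ} (σ : Equiv.Perm (Fin n)) : ℕ :=
  ((Finset.Icc 1 (n - 1) ×ˢ Finset.Icc 1 n).filter
    (fun p => p.1 + 1 < p.2 ∧ entry σ (p.1 + 1) < entry σ p.1 ∧
      entry σ (p.1 + 1) < entry σ p.2 ∧ entry σ p.2 < entry σ p.1)).card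

/-- The signature function `sg_{(T,B)}(i) = |B_{<i}| - |T_{≤i}| + 1`. -/
def sg (T B : Finset ℕ) (i : ℕ) : ℕ :=
  (B.filter (fun b => b < i)).card - (T.filter (fun t => t ≤ i)).card + 1

/-- The `(p,q)`-integer `[m]_{p,q} = Σ_{a+b=m-1} p^a q^b`. -/
def genQInt {R : Type*} [CommRing R] (m : ℕ) (p q : R) : R :=
  ∑ a ∈ Finset.range m, p ^ a * q ^ (m - 1 - a)

/-- The reverse complement of `σ`: `σ^{rc}(i) = n + 1 - σ(n + 1 - i)`. -/
def revComp {n : ℕ} (σ : Equiv.Perm (Fin n)) : Equiv.Perm (Fin n) :=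
  (Fin.revPerm.trans σ).trans Fin.revPerm

namespace DMaux

/-- descent tops of a list (0-based positions). -/
def DtopL (l : List ℕ) : Finset ℕ :=
  ((Finset.range (l.length - 1)).filter (fun i => l.getD (i+1) 0 < l.getD i 0)).image
    (fun i => l.getD i 0)

def DbotL (l : List ℕ) : Finset ℕ :=
  ((Finset.range (l.length - 1)).filter (fun i => l.getD (i+1) 0 < l.getD i 0)).image
    (fun i => l.getD (i+1) 0)

lemma dtopL_nil : DtopL [] = ∅ := rfl
lemma dbotL_nil : DbotL [] = ∅ := rfl
lemma dtopL_single (a : ℕ) : DtopL [a] = ∅ := rfl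
lemma dbotL_single (a : ℕ) : DbotL [a] = ∅ := rfl

lemma dtopL_cons₂ (a b : ℕ) (r : List ℕ) :
    DtopL (a :: b :: r) = if b < a then insert a (DtopL (b :: r)) else DtopL (b :: r) := by
  ext x
  simp only [DtopL, Finset.mem_image, Finset.mem_filter, Finset.mem_range, List.length_cons]
  constructor
  · rintro ⟨i, ⟨hi, hd⟩, rfl⟩
    cases i with
    | zero =>
      simp only [List.getD_cons_zero, List.getD_cons_succ] at hd ⊢
      rw [if_pos hd]
      exact Finset.mem_insert_self _ _
    | succ i =>
      simp only [List.getD_cons_succ] at hd ⊢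
      have hx : (b :: r).getD i 0 ∈ DtopL (b :: r) := by
        refine Finset.mem_image.2 ⟨i, Finset.mem_filter.2 ⟨Finset.mem_range.2 ?_, hd⟩, rfl⟩
        simp only [List.length_cons]; omega
      split
      · exact Finset.mem_insert_of_mem hx
      · exact hx
  · intro hx
    split at hx
    · rcases Finset.mem_insert.1 hx with rfl | hx'
      · exact ⟨0, ⟨by omega, by simpa⟩, by simp⟩
      · obtain ⟨i, hi, rfl⟩ := Finset.mem_image.1 hx'
        simp only [Finset.mem_filter, Finset.mem_range, List.length_cons] at hi
        exact ⟨i + 1, ⟨by omega, by simpa using hi.2⟩, by simp⟩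
    · obtain ⟨i, hi, rfl⟩ := Finset.mem_image.1 hx
      simp only [Finset.mem_filter, Finset.mem_range, List.length_cons] at hi
      exact ⟨i + 1, ⟨by omega, by simpa using hi.2⟩, by simp⟩

lemma dbotL_cons₂ (a b : ℕ) (r : List ℕ) :
    DbotL (a :: b :: r) = if b < a then insert b (DbotL (b :: r)) else DbotL (b :: r) := by
  ext x
  simp only [DbotL, Finset.mem_image, Finset.mem_filter, Finset.mem_range, List.length_cons]
  constructor
  · rintro ⟨i, ⟨hi, hd⟩, rfl⟩
    cases i with
    | zero =>
      simp only [List.getD_cons_zero, List.getD_cons_succ] at hd ⊢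
      rw [if_pos hd]
      exact Finset.mem_insert_self _ _
    | succ i =>
      simp only [List.getD_cons_succ] at hd ⊢
      have hx : (b :: r).getD (i+1) 0 ∈ DbotL (b :: r) := by
        refine Finset.mem_image.2 ⟨i, Finset.mem_filter.2 ⟨Finset.mem_range.2 ?_, hd⟩, rfl⟩
        simp only [List.length_cons]; omega
      split
      · exact Finset.mem_insert_of_mem hx
      · exact hx
  · intro hx
    split at hx
    · rcases Finset.mem_insert.1 hx with rfl | hx'
      · exact ⟨0, ⟨by omega, by simpa⟩, by simp⟩
      · obtain ⟨i, hi, rfl⟩ := Finset.mem_image.1 hx'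
        simp only [Finset.mem_filter, Finset.mem_range, List.length_cons] at hi
        exact ⟨i + 1, ⟨by omega, by simpa using hi.2⟩, by simp⟩
    · obtain ⟨i, hi, rfl⟩ := Finset.mem_image.1 hx
      simp only [Finset.mem_filter, Finset.mem_range, List.length_cons] at hi
      exact ⟨i + 1, ⟨by omega, by simpa using hi.2⟩, by simp⟩


/-- appending a new maximum creates no descent. -/
lemma dtopL_append (l : List ℕ) (m : ℕ) (hl : ∀ x ∈ l, x < m) :
    DtopL (l ++ [m]) = DtopL l ∧ DbotL (l ++ [m]) = DbotL l := by
  induction l with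
  | nil => simp [dtopL_nil, dbotL_nil, dtopL_single, dbotL_single]
  | cons a t ih =>
    cases t with
    | nil =>
      have ham : a < m := hl a (by simp)
      simp only [List.cons_append, List.nil_append]
      rw [dtopL_cons₂, dbotL_cons₂, if_neg (by omega), if_neg (by omega),
        dtopL_single, dbotL_single, dtopL_single, dbotL_single]
      exact ⟨rfl, rfl⟩
    | cons c r =>
      have ih' := ih (fun x hx => hl x (by simp at hx ⊢; tauto))
      simp only [List.cons_append] at ih' ⊢
      rw [dtopL_cons₂, dbotL_cons₂, dtopL_cons₂ a c r, dbotL_cons₂ a c r, ih'.1, ih'.2]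
      exact ⟨rfl, rfl⟩

/-- inserting a new maximum `m` right before `b` (given the element before `b`,
if any, is smaller than `b`) adds `m` as descent top and `b` as descent bottom. -/
lemma dtopL_insert (u : List ℕ) : ∀ (v : List ℕ) (b m : ℕ), b < m →
    (∀ x ∈ u, x < m) → (∀ h : u ≠ [], u.getLast h < b) →
    DtopL (u ++ m :: b :: v) = insert m (DtopL (u ++ b :: v)) ∧
    DbotL (u ++ m :: b :: v) = insert b (DbotL (u ++ b :: v)) := by
  induction u with
  | nil =>
    intro v b m hb _ _
    simp only [List.nil_append]
    rw [dtopL_cons₂, dbotL_cons₂, if_pos hb, if_pos hb]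
    exact ⟨rfl, rfl⟩
  | cons a t ih =>
    intro v b m hb hu hj
    cases t with
    | nil =>
      have ham : a < m := hu a (by simp)
      have hab : a < b := hj (by simp)
      simp only [List.cons_append, List.nil_append] at *
      rw [dtopL_cons₂, dbotL_cons₂, if_neg (by omega), if_neg (by omega),
        dtopL_cons₂ a b v, dbotL_cons₂ a b v, if_neg (by omega), if_neg (by omega),
        dtopL_cons₂, dbotL_cons₂, if_pos hb, if_pos hb]
      exact ⟨rfl, rfl⟩
    | cons c r =>
      have ih' := ih v b m hb (fun x hx => hu x (by simp at hx ⊢; tauto))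
        (fun h => by
          have := hj (by simp)
          rwa [List.getLast_cons h] at this)
      simp only [List.cons_append] at ih' ⊢
      rw [dtopL_cons₂, dbotL_cons₂, dtopL_cons₂ a c (r ++ b :: v), dbotL_cons₂ a c (r ++ b :: v),
        ih'.1, ih'.2]
      constructor
      · split <;> [exact Finset.insert_comm _ _ _; rfl]
      · split <;> [exact Finset.insert_comm _ _ _; rfl]

lemma mem_dbotL (u : List ℕ) : ∀ (v : List ℕ) (b : ℕ) (hu : u ≠ []),
    b < u.getLast hu → b ∈ DbotL (u ++ b :: v) := by
  induction u with
  | nil => intro _ _ h; exact absurd rfl h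
  | cons a t ih =>
    intro v b hu hlast
    cases t with
    | nil =>
      simp only [List.getLast_singleton] at hlast
      simp only [List.cons_append, List.nil_append]
      rw [dbotL_cons₂, if_pos hlast]
      exact Finset.mem_insert_self _ _
    | cons c r =>
      have h2 : (c :: r : List ℕ) ≠ [] := by simp
      have := ih v b h2 (by rwa [List.getLast_cons h2] at hlast)
      simp only [List.cons_append] at this ⊢
      rw [dbotL_cons₂ a c (r ++ b :: v)]
      split
      · exact Finset.mem_insert_of_mem this
      · exact this

lemma build (n : ℕ) : ∀ (T B : Finset ℕ), (∀ b ∈ B, 0 < b) → T.card = B.card →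
    (∀ x : ℕ, (B.filter (fun b => x ≤ b)).card ≤ (T.filter (fun t => x < t)).card) →
    (∀ t ∈ T, t ≤ n) →
    ∃ l : List ℕ, l.Nodup ∧ l.toFinset = Finset.Icc 1 n ∧ DtopL l = T ∧ DbotL l = B := by
  induction n with
  | zero =>
    intro T B hB hcard hcounts hbound
    have hBe : B = ∅ := by
      by_contra hne
      obtain ⟨b, hb⟩ := Finset.nonempty_iff_ne_empty.2 hne
      have h1 : 0 < (B.filter (fun b' => b ≤ b')).card :=
        Finset.card_pos.2 ⟨b, Finset.mem_filter.2 ⟨hb, le_refl b⟩⟩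
      have h2 := hcounts b
      obtain ⟨t, ht⟩ := Finset.card_pos.1 (lt_of_lt_of_le h1 h2)
      have := Finset.mem_filter.1 ht
      have := hbound t this.1
      have := hB b hb
      omega
    have hTe : T = ∅ := Finset.card_eq_zero.1 (by rw [hcard, hBe]; simp)
    exact ⟨[], List.nodup_nil, by simp, by simp [hTe, dtopL_nil], by simp [hBe, dbotL_nil]⟩
  | succ n ih =>
    intro T B hB hcard hcounts hbound
    by_cases hmem : n + 1 ∈ T
    · -- max case: insert n+1 before b = max B
      have hTne : T.Nonempty := ⟨_, hmem⟩
      have hBne : B.Nonempty := by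
        rw [← Finset.card_pos, ← hcard, Finset.card_pos]; exact hTne
      set b := B.max' hBne with hbdef
      have hbB : b ∈ B := B.max'_mem hBne
      have hbpos : 0 < b := hB b hbB
      have hble : b ≤ n := by
        have h1 : 0 < (B.filter (fun b' => b ≤ b')).card :=
          Finset.card_pos.2 ⟨b, Finset.mem_filter.2 ⟨hbB, le_refl b⟩⟩
        obtain ⟨t, ht⟩ := Finset.card_pos.1 (lt_of_lt_of_le h1 (hcounts b))
        have h2 := Finset.mem_filter.1 ht
        have := hbound t h2.1
        omega
      set T' := T.erase (n+1) with hT'def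
      set B' := B.erase b with hB'def
      have hcard' : T'.card = B'.card := by
        rw [hT'def, hB'def, Finset.card_erase_of_mem hmem, Finset.card_erase_of_mem hbB, hcard]
      have hcounts' : ∀ x : ℕ, (B'.filter (fun b' => x ≤ b')).card ≤
          (T'.filter (fun t => x < t)).card := by
        intro x
        rw [hT'def, hB'def, Finset.filter_erase, Finset.filter_erase]
        by_cases hx : x ≤ b
        · rw [Finset.card_erase_of_mem (Finset.mem_filter.2 ⟨hbB, hx⟩),
            Finset.card_erase_of_mem (Finset.mem_filter.2 ⟨hmem, by omega⟩)]
          exact Nat.sub_le_sub_right (hcounts x) 1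
        · have : B.filter (fun b' => x ≤ b') = ∅ := by
            apply Finset.filter_eq_empty_iff.2
            intro b' hb'
            have := B.le_max' b' hb'
            omega
          rw [this]
          simp
      have hbound' : ∀ t ∈ T', t ≤ n := by
        intro t ht
        have h1 := Finset.mem_of_mem_erase ht
        have h2 := Finset.ne_of_mem_erase ht
        have := hbound t h1
        omega
      have hB' : ∀ b' ∈ B', 0 < b' := fun b' hb' => hB b' (Finset.mem_of_mem_erase hb')
      obtain ⟨l', hnd', htf', htop', hbot'⟩ := ih T' B' hB' hcard' hcounts' hbound'
      have hbl' : b ∈ l' := by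
        rw [← List.mem_toFinset, htf', Finset.mem_Icc]; omega
      obtain ⟨u, v, huv⟩ := List.append_of_mem hbl'
      have hbu : b ∉ u := by
        have := huv ▸ hnd'
        rw [List.nodup_append] at this
        exact fun h => this.2.2 b h b (by simp) rfl
      have hlval : ∀ x ∈ l', x < n + 1 := by
        intro x hx
        have := List.mem_toFinset.2 hx
        rw [htf', Finset.mem_Icc] at this
        omega
      have hj : ∀ h : u ≠ [], u.getLast h < b := by
        intro h
        by_contra hc
        have hmm : u.getLast h ∈ u := List.getLast_mem h
        have hne : u.getLast h ≠ b := fun he => hbu (he ▸ hmm)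
        have hlt : b < u.getLast h := by omega
        have : b ∈ DbotL l' := huv ▸ mem_dbotL u v b h hlt
        rw [hbot', hB'def] at this
        exact (Finset.notMem_erase b B) this
      have hu : ∀ x ∈ u, x < n + 1 := fun x hx => hlval x (huv ▸ (by simp [hx]))
      have hins := dtopL_insert u v b (n+1) (by omega) hu hj
      refine ⟨u ++ (n+1) :: b :: v, ?_, ?_, ?_, ?_⟩
      · have hperm : (u ++ (n+1) :: b :: v).Perm ((n+1) :: (u ++ b :: v)) := List.perm_middle
        rw [hperm.nodup_iff]
        refine List.nodup_cons.2 ⟨?_, huv ▸ hnd'⟩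
        intro hc
        exact absurd (hlval _ (huv ▸ hc)) (by omega)
      · have hperm : (u ++ (n+1) :: b :: v).Perm ((n+1) :: (u ++ b :: v)) := List.perm_middle
        rw [List.toFinset_eq_of_perm _ _ hperm, List.toFinset_cons, ← huv, htf']
        ext x; simp [Finset.mem_Icc]; omega
      · rw [hins.1, ← huv, htop', hT'def]
        exact Finset.insert_erase hmem
      · rw [hins.2, ← huv, hbot', hB'def]
        exact Finset.insert_erase hbB
    · -- append n+1 at the end
      have hbound' : ∀ t ∈ T, t ≤ n := by
        intro t ht
        have := hbound t ht
        rcases Nat.lt_or_ge t (n+1) with h | h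
        · omega
        · exact absurd (by omega : t = n + 1) (fun he => hmem (he ▸ ht))
      obtain ⟨l', hnd', htf', htop', hbot'⟩ := ih T B hB hcard hcounts hbound'
      have hlval : ∀ x ∈ l', x < n + 1 := by
        intro x hx
        have := List.mem_toFinset.2 hx
        rw [htf', Finset.mem_Icc] at this
        omega
      have happ := dtopL_append l' (n+1) hlval
      refine ⟨l' ++ [n+1], ?_, ?_, ?_, ?_⟩
      · rw [List.nodup_append]
        exact ⟨hnd', List.nodup_singleton _, fun x hx y hy => by
          simp at hy; have := hlval _ hx; omega⟩
      · rw [List.toFinset_append, htf']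
        ext x; simp [Finset.mem_Icc]; omega
      · rw [happ.1, htop']
      · rw [happ.2, hbot']
lemma sort_getD_lt (S : Finset ℕ) {i j : ℕ} (hij : i < j) (hj : j < S.card) :
    (S.sort (· ≤ ·)).getD i 0 < (S.sort (· ≤ ·)).getD j 0 := by
  have hlen : (S.sort (· ≤ ·)).length = S.card := Finset.length_sort _
  have hi' : i < (S.sort (· ≤ ·)).length := by omega
  have hj' : j < (S.sort (· ≤ ·)).length := by omega
  rw [List.getD_eq_getElem _ _ hi', List.getD_eq_getElem _ _ hj']
  have := (Finset.sortedLT_sort S).strictMono_get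
    (a := ⟨i, hi'⟩) (b := ⟨j, hj'⟩) (by exact hij)
  simpa [List.get_eq_getElem] using this

lemma filter_eq_image (S : Finset ℕ) (p : ℕ → Prop) [DecidablePred p] :
    S.filter p = ((Finset.range S.card).filter (fun i => p ((S.sort (· ≤ ·)).getD i 0))).image
      (fun i => (S.sort (· ≤ ·)).getD i 0) := by
  have hlen : (S.sort (· ≤ ·)).length = S.card := Finset.length_sort _
  ext s
  simp only [Finset.mem_filter, Finset.mem_image, Finset.mem_range]
  constructor
  · rintro ⟨hs, hp⟩
    have hmem : s ∈ S.sort (· ≤ ·) := (Finset.mem_sort _).2 hs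
    have hidx : (S.sort (· ≤ ·)).idxOf s < (S.sort (· ≤ ·)).length :=
      List.idxOf_lt_length_iff.2 hmem
    have hgd : (S.sort (· ≤ ·)).getD ((S.sort (· ≤ ·)).idxOf s) 0 = s := by
      rw [List.getD_eq_getElem _ _ hidx]
      exact List.getElem_idxOf hidx
    exact ⟨(S.sort (· ≤ ·)).idxOf s, ⟨by omega, by rw [hgd]; exact hp⟩, hgd⟩
  · rintro ⟨i, ⟨hi, hp⟩, rfl⟩
    have hi' : i < (S.sort (· ≤ ·)).length := by omega
    have hmem : (S.sort (· ≤ ·)).getD i 0 ∈ S.sort (· ≤ ·) := by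
      rw [List.getD_eq_getElem _ _ hi']
      exact List.getElem_mem _
    exact ⟨(Finset.mem_sort _).1 hmem, hp⟩

lemma filter_card_index (S : Finset ℕ) (p : ℕ → Prop) [DecidablePred p] :
    (S.filter p).card =
      ((Finset.range S.card).filter (fun i => p ((S.sort (· ≤ ·)).getD i 0))).card := by
  rw [filter_eq_image S p]
  apply Finset.card_image_of_injOn
  intro i hi j hj hij
  simp only [Finset.coe_filter, Set.mem_setOf_eq, Finset.mem_range] at hi hj
  have hij' : (S.sort (· ≤ ·)).getD i 0 = (S.sort (· ≤ ·)).getD j 0 := hij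
  rcases lt_trichotomy i j with h | h | h
  · exact absurd (hij' ▸ sort_getD_lt S h hj.1) (lt_irrefl _)
  · exact h
  · exact absurd (hij'.symm ▸ sort_getD_lt S h hi.1) (lt_irrefl _)

lemma counts_of_DM (T B : Finset ℕ) (hcard : T.card = B.card)
    (h : ∀ i < T.card, (B.sort (· ≤ ·)).getD i 0 < (T.sort (· ≤ ·)).getD i 0) (x : ℕ) :
    (B.filter (fun b => x ≤ b)).card ≤ (T.filter (fun t => x < t)).card := by
  rw [filter_card_index B _, filter_card_index T _, ← hcard]
  apply Finset.card_le_card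
  intro i hi
  rw [Finset.mem_filter, Finset.mem_range] at hi ⊢
  exact ⟨hi.1, lt_of_le_of_lt hi.2 (h i hi.1)⟩

lemma DM_of_counts (T B : Finset ℕ) (hcard : T.card = B.card)
    (h : ∀ x : ℕ, (B.filter (fun b => x ≤ b)).card ≤ (T.filter (fun t => x < t)).card) :
    ∀ i < T.card, (B.sort (· ≤ ·)).getD i 0 < (T.sort (· ≤ ·)).getD i 0 := by
  intro i hiT
  have hiB : i < B.card := hcard ▸ hiT
  set b := (B.sort (· ≤ ·)).getD i 0 with hbdef
  by_contra hc
  push_neg at hc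
  have hBlow : T.card - i ≤ ((Finset.range B.card).filter
      (fun j => b ≤ (B.sort (· ≤ ·)).getD j 0)).card := by
    have hsub : Finset.Ico i B.card ⊆ (Finset.range B.card).filter
        (fun j => b ≤ (B.sort (· ≤ ·)).getD j 0) := by
      intro j hj
      rw [Finset.mem_Ico] at hj
      refine Finset.mem_filter.2 ⟨Finset.mem_range.2 hj.2, ?_⟩
      rcases eq_or_lt_of_le hj.1 with rfl | hlt
      · exact le_refl _
      · exact le_of_lt (sort_getD_lt B hlt hj.2)
    calc T.card - i = (Finset.Ico i B.card).card := by rw [Nat.card_Ico]; omega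
      _ ≤ _ := Finset.card_le_card hsub
  have hTup : ((Finset.range T.card).filter
      (fun j => b < (T.sort (· ≤ ·)).getD j 0)).card ≤ T.card - i - 1 := by
    have hsub : (Finset.range T.card).filter
        (fun j => b < (T.sort (· ≤ ·)).getD j 0) ⊆ Finset.Ioo i T.card := by
      intro j hj
      rw [Finset.mem_filter, Finset.mem_range] at hj
      rw [Finset.mem_Ioo]
      refine ⟨?_, hj.1⟩
      by_contra hji
      push_neg at hji
      have hle : (T.sort (· ≤ ·)).getD j 0 ≤ (T.sort (· ≤ ·)).getD i 0 := by
        rcases eq_or_lt_of_le hji with rfl | hlt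
        · exact le_refl _
        · exact le_of_lt (sort_getD_lt T hlt hiT)
      omega
    calc _ ≤ (Finset.Ioo i T.card).card := Finset.card_le_card hsub
      _ = T.card - i - 1 := by rw [Nat.card_Ioo]
  have hx := h b
  rw [filter_card_index B _, filter_card_index T _] at hx
  omega

lemma exists_perm_of_list (n : ℕ) (l : List ℕ) (hnd : l.Nodup)
    (htf : l.toFinset = Finset.Icc 1 n) :
    ∃ σ : Equiv.Perm (Fin n), Destop σ = DtopL l ∧ Desbot σ = DbotL l := by
  have hlen : l.length = n := by
    have h := List.toFinset_card_of_nodup hnd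
    rw [htf] at h
    simpa [Nat.card_Icc] using h.symm
  have hval : ∀ i, i < n → 1 ≤ l.getD i 0 ∧ l.getD i 0 ≤ n := by
    intro i hi
    have hi' : i < l.length := by omega
    have hm : l.getD i 0 ∈ l := by
      rw [List.getD_eq_getElem _ _ hi']; exact List.getElem_mem _
    have := List.mem_toFinset.2 hm
    rwa [htf, Finset.mem_Icc] at this
  have hinj : Function.Injective (fun j : Fin n => (⟨l.getD j 0 - 1, by
      have := hval j j.2; omega⟩ : Fin n)) := by
    intro j₁ j₂ h
    have h1 := hval j₁ j₁.2
    have h2 := hval j₂ j₂.2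
    have hv : (l.getD (j₁ : ℕ) 0 - 1 : ℕ) = l.getD (j₂ : ℕ) 0 - 1 := congrArg Fin.val h
    have hg : l.getD (j₁ : ℕ) 0 = l.getD (j₂ : ℕ) 0 := by omega
    rw [List.getD_eq_getElem _ _ (by omega : (j₁ : ℕ) < l.length),
        List.getD_eq_getElem _ _ (by omega : (j₂ : ℕ) < l.length)] at hg
    exact Fin.ext (hnd.getElem_inj_iff.1 hg)
  set σ := Equiv.ofBijective _ (Finite.injective_iff_bijective.1 hinj) with hσ
  have hentry : ∀ i, 1 ≤ i → i ≤ n → entry σ i = l.getD (i - 1) 0 := by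
    intro i h1 h2
    have hlt : i - 1 < n := by omega
    simp only [entry]
    rw [dif_pos hlt, hσ, Equiv.ofBijective_apply]
    have := hval (i - 1) hlt
    simp only []
    omega
  refine ⟨σ, ?_, ?_⟩
  · ext x
    simp only [Destop, Des, DtopL, Finset.mem_image, Finset.mem_filter, Finset.mem_Icc,
      Finset.mem_range, hlen]
    constructor
    · rintro ⟨i, ⟨⟨h1, h2⟩, hd⟩, rfl⟩
      have hn2 : 2 ≤ n := by omega
      have e1 : entry σ i = l.getD (i - 1) 0 := hentry i h1 (by omega)
      have e2 : entry σ (i + 1) = l.getD i 0 := by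
        have := hentry (i + 1) (by omega) (by omega)
        simpa using this
      rw [e1, e2] at hd
      refine ⟨i - 1, ⟨by omega, ?_⟩, e1.symm⟩
      rw [(show i - 1 + 1 = i by omega)]
      exact hd
    · rintro ⟨j, ⟨hj, hd⟩, rfl⟩
      have e1 : entry σ (j + 1) = l.getD j 0 := by
        have := hentry (j + 1) (by omega) (by omega)
        simpa using this
      have e2 : entry σ (j + 1 + 1) = l.getD (j + 1) 0 := by
        have := hentry (j + 2) (by omega) (by omega)
        simpa using this
      exact ⟨j + 1, ⟨⟨by omega, by omega⟩, by rw [e1, e2]; exact hd⟩, e1⟩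
  · ext x
    simp only [Desbot, Des, DbotL, Finset.mem_image, Finset.mem_filter, Finset.mem_Icc,
      Finset.mem_range, hlen]
    constructor
    · rintro ⟨i, ⟨⟨h1, h2⟩, hd⟩, rfl⟩
      have hn2 : 2 ≤ n := by omega
      have e1 : entry σ i = l.getD (i - 1) 0 := hentry i h1 (by omega)
      have e2 : entry σ (i + 1) = l.getD i 0 := by
        have := hentry (i + 1) (by omega) (by omega)
        simpa using this
      rw [e1, e2] at hd
      refine ⟨i - 1, ⟨by omega, ?_⟩, ?_⟩
      · rw [(show i - 1 + 1 = i by omega)]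
        exact hd
      · rw [(show i - 1 + 1 = i by omega)]
        exact e2.symm
    · rintro ⟨j, ⟨hj, hd⟩, rfl⟩
      have e1 : entry σ (j + 1) = l.getD j 0 := by
        have := hentry (j + 1) (by omega) (by omega)
        simpa using this
      have e2 : entry σ (j + 1 + 1) = l.getD (j + 1) 0 := by
        have := hentry (j + 2) (by omega) (by omega)
        simpa using this
      exact ⟨j + 1, ⟨⟨by omega, by omega⟩, by rw [e1, e2]; exact hd⟩, e2⟩

lemma entry_inj {n : ℕ} (σ : Equiv.Perm (Fin n)) {i j : ℕ}
    (hi1 : 1 ≤ i) (hi2 : i ≤ n) (hj1 : 1 ≤ j) (hj2 : j ≤ n)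
    (h : entry σ i = entry σ j) : i = j := by
  have hi : i - 1 < n := by omega
  have hj : j - 1 < n := by omega
  simp only [entry] at h
  rw [dif_pos hi, dif_pos hj] at h
  have h2 : σ ⟨i - 1, hi⟩ = σ ⟨j - 1, hj⟩ := Fin.ext (by omega)
  have h3 := σ.injective h2
  have h4 : i - 1 = j - 1 := congrArg Fin.val h3
  omega

lemma counts_of_perm {n : ℕ} (σ : Equiv.Perm (Fin n)) (x : ℕ) :
    ((Desbot σ).filter (fun b => x ≤ b)).card ≤ ((Destop σ).filter (fun t => x < t)).card := by
  have hDes : ∀ i ∈ Des σ, 1 ≤ i ∧ i ≤ n - 1 ∧ entry σ (i + 1) < entry σ i := by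
    intro i hi
    have h := Finset.mem_filter.1 hi
    have h2 := Finset.mem_Icc.1 h.1
    exact ⟨h2.1, h2.2, h.2⟩
  rw [Desbot, Destop, Finset.filter_image, Finset.filter_image]
  have hsub : (Des σ).filter (fun i => x ≤ entry σ (i + 1)) ⊆
      (Des σ).filter (fun i => x < entry σ i) := by
    intro i hi
    have h1 := Finset.mem_filter.1 hi
    obtain ⟨_, _, hd⟩ := hDes i h1.1
    exact Finset.mem_filter.2 ⟨h1.1, by omega⟩
  have hinj : Set.InjOn (entry σ) ((Des σ).filter (fun i => x < entry σ i)) := by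
    intro i hi j hj hij
    have hi' := hDes i (Finset.mem_of_mem_filter _ hi)
    have hj' := hDes j (Finset.mem_of_mem_filter _ hj)
    exact entry_inj σ hi'.1 (by omega) hj'.1 (by omega) hij
  calc (((Des σ).filter (fun i => x ≤ entry σ (i + 1))).image (fun i => entry σ (i + 1))).card
      ≤ ((Des σ).filter (fun i => x ≤ entry σ (i + 1))).card := Finset.card_image_le
    _ ≤ ((Des σ).filter (fun i => x < entry σ i)).card := Finset.card_le_card hsub
    _ = (((Des σ).filter (fun i => x < entry σ i)).image (entry σ)).card :=
        (Finset.card_image_of_injOn hinj).symm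

end DMaux


/-- `(T, B)` is a descent matching iff for every `n ≥ max T` (arbitrary `n ≥ 0`
when `T = ∅`) there is a permutation `σ ∈ S_n` with `Destop σ = T` and `Desbot σ = B`. -/
theorem descentMatching_iff_exists_perm (T B : Finset ℕ)
    (hT : ∀ t ∈ T, 0 < t) (hB : ∀ b ∈ B, 0 < b) (hcard : T.card = B.card) :
    DescentMatching T B ↔
      ∀ n : ℕ, (∀ t ∈ T, t ≤ n) →
        ∃ σ : Equiv.Perm (Fin n), Destop σ = T ∧ Desbot σ = B := by
  constructor
  · intro hDM n hbound
    have hcounts := DMaux.counts_of_DM T B hcard hDM.2.2.2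
    obtain ⟨l, hnd, htf, htop, hbot⟩ := DMaux.build n T B hB hcard hcounts hbound
    obtain ⟨σ, h1, h2⟩ := DMaux.exists_perm_of_list n l hnd htf
    exact ⟨σ, by rw [h1, htop], by rw [h2, hbot]⟩
  · intro h
    refine ⟨hcard, hT, hB, ?_⟩
    obtain ⟨σ, h1, h2⟩ := h (T.sup id) (fun t ht => Finset.le_sup (f := id) ht)
    have hcounts : ∀ x : ℕ, (B.filter (fun b => x ≤ b)).card ≤
        (T.filter (fun t => x < t)).card := by
      intro x
      rw [← h1, ← h2]
      exact DMaux.counts_of_perm σ x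
    exact DMaux.DM_of_counts T B hcard hcounts
end

section
/- For every permutation σ ∈ Av_n(312), the complement of the descent bottom set equals the set of left-to-right maxima: [n] \ Desbot(σ) = LRmax(σ). -/
open scoped Classical

lemma entry_eq_aux {n : ℕ} (σ : Equiv.Perm (Fin n)) {i : ℕ} (h1 : 1 ≤ i) (h2 : i ≤ n) :
    entry σ i = (σ ⟨i - 1, by omega⟩ : ℕ) + 1 := by
  unfold entry
  rw [dif_pos (by omega : i - 1 < n)]

lemma entry_bounds {n : ℕ} (σ : Equiv.Perm (Fin n)) {i : ℕ} (h1 : 1 ≤ i) (h2 : i ≤ n) :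
    1 ≤ entry σ i ∧ entry σ i ≤ n := by
  rw [entry_eq_aux σ h1 h2]
  have := (σ ⟨i - 1, by omega⟩).isLt
  omega

lemma entry_inj {n : ℕ} (σ : Equiv.Perm (Fin n)) {i j : ℕ} (hi1 : 1 ≤ i) (hin : i ≤ n)
    (hj1 : 1 ≤ j) (hjn : j ≤ n) (he : entry σ i = entry σ j) : i = j := by
  rw [entry_eq_aux σ hi1 hin, entry_eq_aux σ hj1 hjn] at he
  have : (⟨i - 1, by omega⟩ : Fin n) = ⟨j - 1, by omega⟩ :=
    σ.injective (Fin.ext (by omega))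
  have := Fin.mk.injEq (i - 1) _ (j - 1) _ ▸ this
  omega

lemma entry_surj {n : ℕ} (σ : Equiv.Perm (Fin n)) {v : ℕ} (h1 : 1 ≤ v) (h2 : v ≤ n) :
    ∃ p, 1 ≤ p ∧ p ≤ n ∧ entry σ p = v := by
  refine ⟨(σ.symm ⟨v - 1, by omega⟩ : ℕ) + 1, by omega, by
    have := (σ.symm ⟨v - 1, by omega⟩).isLt; omega, ?_⟩
  rw [entry_eq_aux σ (by omega) (by have := (σ.symm ⟨v - 1, by omega⟩).isLt; omega)]
  have : σ (σ.symm ⟨v - 1, by omega⟩) = ⟨v - 1, by omega⟩ := σ.apply_symm_apply _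
  simp only [Nat.add_sub_cancel, Fin.eta]
  rw [this]
  show v - 1 + 1 = v
  omega

set_option maxRecDepth 10000 in
lemma contains312 {n : ℕ} (σ : Equiv.Perm (Fin n)) (a b c : Fin n) (hab : a < b) (hbc : b < c)
    (h1 : σ b < σ c) (h2 : σ c < σ a) : Contains (![2, 0, 1] : Fin 3 → Fin 3) σ := by
  refine ⟨![a, b, c], ?_, ?_⟩
  · intro x y hxy
    fin_cases x <;> fin_cases y <;>
      simp_all [Matrix.cons_val_zero, Matrix.cons_val_one, Matrix.head_cons,
        Fin.mk_zero, Fin.mk_one, show ((⟨2, by norm_num⟩ : Fin 3)) = 2 from rfl,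
        Matrix.cons_val_two, Matrix.tail_cons] <;>
      first | exact hab | exact hbc | exact hab.trans hbc
  · have h3 : σ b < σ a := h1.trans h2
    intro x y
    fin_cases x <;> fin_cases y <;>
      simp_all [Matrix.cons_val_zero, Matrix.cons_val_one, Matrix.head_cons,
        Matrix.cons_val_two, Matrix.tail_cons] <;>
      first | exact h1 | exact h2 | exact h3 | exact h1.le | exact h2.le | exact h3.le

/-- For `σ ∈ Av_n(312)`, `[n] \ Desbot σ = LRmax σ`. -/
theorem compl_desbot_eq_lrmax_of_avoids312 (n : ℕ) (σ : Equiv.Perm (Fin n))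
    (h : AvoidsPat (![2, 0, 1] : Fin 3 → Fin 3) σ) :
    Finset.Icc 1 n \ Desbot σ = LRmax σ := by
  ext v
  simp only [Finset.mem_sdiff, Finset.mem_Icc, LRmax, Desbot, Des, Finset.mem_image,
    Finset.mem_filter, Finset.mem_Icc, not_exists]
  constructor
  · rintro ⟨⟨hv1, hvn⟩, hnd⟩
    obtain ⟨p, hp1, hpn, hpv⟩ := entry_surj σ hv1 hvn
    refine ⟨p, ⟨⟨hp1, hpn⟩, ?_⟩, hpv⟩
    intro j hj1 hjp
    by_contra hge
    push_neg at hge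
    have hjn : j ≤ n := by omega
    have hne : entry σ j ≠ entry σ p := fun he => by
      have := entry_inj σ hj1 hjn hp1 hpn he; omega
    have hgt : entry σ p < entry σ j := by omega
    have hp2 : 2 ≤ p := by omega
    -- compare entry σ (p-1) with entry σ p
    have hq1 : 1 ≤ p - 1 := by omega
    have hqn : p - 1 ≤ n := by omega
    have hne2 : entry σ (p - 1) ≠ entry σ p := fun he => by
      have := entry_inj σ hq1 hqn hp1 hpn he; omega
    rcases lt_or_gt_of_ne hne2 with hlt | hgt2
    · -- entry σ (p-1) < entry σ p : 312 pattern using j, p-1, p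
      have hjq : j ≠ p - 1 := fun he => by rw [he] at hge; omega
      have hjq' : j < p - 1 := by omega
      apply h
      have hA := entry_eq_aux σ hj1 hjn
      have hB := entry_eq_aux σ hq1 hqn
      have hC := entry_eq_aux σ hp1 hpn
      rw [hB, hC] at hlt
      rw [hC, hA] at hgt
      exact contains312 σ ⟨j - 1, by omega⟩ ⟨p - 1 - 1, by omega⟩ ⟨p - 1, by omega⟩
        (Fin.mk_lt_mk.mpr (by omega)) (Fin.mk_lt_mk.mpr (by omega))
        (Fin.lt_def.mpr (lt_of_add_lt_add_right hlt))
        (Fin.lt_def.mpr (lt_of_add_lt_add_right hgt))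
    · -- entry σ p < entry σ (p-1): descent into p, contradiction with hnd
      have := hnd (p - 1)
      rw [not_and_or] at this
      rcases this with h1 | h2
      · exact h1 ⟨⟨by omega, by omega⟩, by
          have e : p - 1 + 1 = p := by omega
          rw [e]; exact hgt2⟩
      · apply h2
        have e : p - 1 + 1 = p := by omega
        rw [e]; exact hpv
  · rintro ⟨p, ⟨⟨hp1, hpn⟩, hmax⟩, rfl⟩
    obtain ⟨hb1, hb2⟩ := entry_bounds σ hp1 hpn
    refine ⟨⟨hb1, hb2⟩, ?_⟩
    rintro i ⟨⟨⟨hi1, hin⟩, hd⟩, he⟩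
    have hi1n : 1 ≤ i + 1 := by omega
    have hinn : i + 1 ≤ n := by omega
    have hip : i + 1 = p := entry_inj σ hi1n hinn hp1 hpn he
    have := hmax i hi1 (by omega)
    rw [← hip] at this
    omega
end

section
/- For every permutation σ ∈ Av_n(231), the complement of the descent top set equals the set of right-to-left minima: [n] \ Destop(σ) = RLmin(σ). -/
open scoped Classical

/-- For `σ ∈ Av_n(231)`, `[n] \ Destop σ = RLmin σ`. -/
theorem compl_destop_eq_rlmin_of_avoids231 (n : ℕ) (σ : Equiv.Perm (Fin n))
    (h : AvoidsPat (![1, 2, 0] : Fin 3 → Fin 3) σ) :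
    Finset.Icc 1 n \ Destop σ = RLmin σ := by
  have hentry : ∀ (i : ℕ) (hi : i - 1 < n), entry σ i = (σ ⟨i - 1, hi⟩ : ℕ) + 1 := by
    intro i hi; simp [entry, hi]
  have hinj : ∀ a b : ℕ, 1 ≤ a → a ≤ n → 1 ≤ b → b ≤ n → entry σ a = entry σ b → a = b := by
    intro a b ha1 han hb1 hbn heq
    rw [hentry a (by omega), hentry b (by omega)] at heq
    have h1 : σ ⟨a - 1, by omega⟩ = σ ⟨b - 1, by omega⟩ := Fin.ext (by omega)
    have h2 := σ.injective h1
    have h3 : a - 1 = b - 1 := congrArg Fin.val h2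
    omega
  ext v
  simp only [Finset.mem_sdiff, Finset.mem_Icc, Destop, Des, RLmin, Finset.mem_image,
    Finset.mem_filter, Finset.mem_Icc, not_exists]
  constructor
  · rintro ⟨⟨hv1, hvn⟩, hnd⟩
    have hn : 0 < n := lt_of_le_of_lt (Nat.zero_le _) (lt_of_lt_of_le hv1 hvn)
    obtain ⟨i0, hσi0⟩ : ∃ i0 : Fin n, σ i0 = ⟨v - 1, by omega⟩ :=
      ⟨σ.symm ⟨v - 1, by omega⟩, σ.apply_symm_apply _⟩
    obtain ⟨i, hidef⟩ : ∃ i : ℕ, i = (i0 : ℕ) + 1 := ⟨_, rfl⟩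
    have hi0lt : (i0 : ℕ) < n := i0.isLt
    have hi1 : 1 ≤ i := by omega
    have hin : i ≤ n := by omega
    have hieq : entry σ i = v := by
      rw [hentry i (by omega)]
      have hmk : (⟨i - 1, by omega⟩ : Fin n) = i0 := by ext; simp; omega
      rw [hmk, hσi0]; simp; omega
    refine ⟨i, ⟨⟨⟨hi1, hin⟩, ?_⟩, hieq⟩⟩
    intro j hij hjn
    by_contra hle
    push_neg at hle
    -- entry σ j ≤ entry σ i = v, and j ≠ i so strict
    rw [hieq] at hle
    have hj1 : 1 ≤ j := by omega
    have hjv : entry σ j < v := by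
      rcases lt_or_eq_of_le hle with h' | h'
      · exact h'
      · exfalso
        have := hinj j i hj1 hjn hi1 hin (by rw [h', hieq])
        omega
    -- i is not a descent position
    have hin1 : i ≤ n - 1 := by omega
    have hnodesc : ¬ entry σ (i + 1) < entry σ i := by
      intro hd
      exact hnd i ⟨⟨⟨hi1, hin1⟩, hd⟩, hieq⟩
    push_neg at hnodesc
    rw [hieq] at hnodesc
    have hip1 : v < entry σ (i + 1) := by
      rcases lt_or_eq_of_le hnodesc with h' | h'
      · exact h'
      · exfalso
        have := hinj i (i + 1) hi1 hin (by omega) (by omega) (by rw [hieq, h'])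
        omega
    have hij2 : i + 1 < j := by
      by_contra hc
      have hji : j = i + 1 := by omega
      rw [hji] at hjv; omega
    -- build 231 pattern
    exfalso
    apply h
    refine ⟨![⟨i - 1, by omega⟩, ⟨i, by omega⟩, ⟨j - 1, by omega⟩], ?_, ?_⟩
    · intro a b hab
      fin_cases a <;> fin_cases b <;>
        first
          | exact absurd hab (by decide)
          | exact Fin.mk_lt_mk.mpr (by omega)
    · have e1 : (σ ⟨i - 1, by omega⟩ : ℕ) = v - 1 := by
        have := hentry i (by omega); omega
      have e2 : (σ ⟨i, by omega⟩ : ℕ) = entry σ (i + 1) - 1 := by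
        have h' := hentry (i+1) (by omega)
        have : (⟨i + 1 - 1, by omega⟩ : Fin n) = ⟨i, by omega⟩ := by ext; simp
        rw [this] at h'; omega
      have e3 : (σ ⟨j - 1, by omega⟩ : ℕ) = entry σ j - 1 := by
        have := hentry j (by omega); omega
      have hj0 : 1 ≤ entry σ j := by
        rw [hentry j (by omega)]; omega
      have b01 : σ ⟨i - 1, by omega⟩ < σ (⟨i, by omega⟩ : Fin n) := by
        rw [Fin.lt_def]; omega
      have b20 : σ ⟨j - 1, by omega⟩ < σ (⟨i - 1, by omega⟩ : Fin n) := by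
        rw [Fin.lt_def]; omega
      have b21 : σ ⟨j - 1, by omega⟩ < σ (⟨i, by omega⟩ : Fin n) := by
        rw [Fin.lt_def]; omega
      intro a b
      fin_cases a <;> fin_cases b <;>
        refine ⟨fun hc => ?_, fun hc => ?_⟩ <;>
        first
          | exact absurd hc (by decide)
          | exact b01
          | exact b20
          | exact b21
          | exact (by decide)
          | exact absurd hc (lt_irrefl _)
          | exact absurd hc (not_lt.2 b01.le)
          | exact absurd hc (not_lt.2 b20.le)
          | exact absurd hc (not_lt.2 b21.le)
  · rintro ⟨i, ⟨⟨hi1, hin⟩, hmin⟩, hiv⟩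
    have hn : 0 < n := by omega
    have hventry : entry σ i = v := hiv
    have hval : (σ ⟨i - 1, by omega⟩ : ℕ) + 1 = v := by
      rw [← hventry, hentry i (by omega)]
    have hσlt : (σ ⟨i - 1, by omega⟩ : ℕ) < n := (σ _).isLt
    refine ⟨⟨by omega, by omega⟩, ?_⟩
    intro k
    rintro ⟨⟨⟨hk1, hkn⟩, hdesc⟩, hkv⟩
    -- entry σ k = v = entry σ i, so k = i
    have hkn' : k ≤ n := by omega
    have hki : k = i := hinj k i hk1 hkn' hi1 hin (by rw [hkv, hiv])
    subst hki
    have := hmin (k + 1) (by omega) (by omega)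
    omega
end

section
/- For every permutation σ ∈ S_n and every i ∈ [n], (2_i31)σ + (31 2_i)σ + |{t ∈ Destop(σ) : t ≤ i}| = |{b ∈ Desbot(σ) : b < i}|. Equivalently, if T = Destop(σ) and B = Desbot(σ), then (2_i31)σ + (31 2_i)σ = sg_{n,(T,B)}(i) − 1. -/
open scoped Classical

lemma entry_injOn {n : ℕ} (σ : Equiv.Perm (Fin n)) {a b : ℕ}
    (ha1 : 1 ≤ a) (han : a ≤ n) (hb1 : 1 ≤ b) (hbn : b ≤ n)
    (h : entry σ a = entry σ b) : a = b := by
  have ha : a - 1 < n := by omega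
  have hb : b - 1 < n := by omega
  simp only [entry, dif_pos ha, dif_pos hb] at h
  have hv : (σ ⟨a - 1, ha⟩ : ℕ) = (σ ⟨b - 1, hb⟩ : ℕ) := by omega
  have := σ.injective (Fin.ext hv)
  have : a - 1 = b - 1 := congrArg Fin.val this
  omega

lemma mem_Des_iff {n : ℕ} (σ : Equiv.Perm (Fin n)) (m : ℕ) :
    m ∈ Des σ ↔ (1 ≤ m ∧ m ≤ n - 1) ∧ entry σ (m + 1) < entry σ m := by
  simp [Des, Finset.mem_filter, Finset.mem_Icc]

/-- For every `σ ∈ S_n` and `i ∈ [n]`,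
`(2_i31)σ + (31 2_i)σ + |Destop(σ)_{≤i}| = |Desbot(σ)_{<i}|`,
i.e. `(2_i31)σ + (31 2_i)σ = sg_{n,(T,B)}(i) − 1`. -/
theorem occ_at_add_eq_signature (n : ℕ) (σ : Equiv.Perm (Fin n)) (i : ℕ)
    (hi : i ∈ Finset.Icc 1 n) :
    occ2_31at σ i + occ31_2at σ i + ((Destop σ).filter (fun t => t ≤ i)).card =
      ((Desbot σ).filter (fun b => b < i)).card := by
  classical
  obtain ⟨hi1, hin⟩ := Finset.mem_Icc.mp hi
  have hilt : i - 1 < n := by omega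
  set pos : ℕ := (σ.symm ⟨i - 1, hilt⟩ : ℕ) + 1 with hposdef
  have hpos1 : 1 ≤ pos := by omega
  have hposn : pos ≤ n := by
    have := (σ.symm ⟨i - 1, hilt⟩).isLt
    omega
  have hpos_entry : entry σ pos = i := by
    have hp : pos - 1 < n := by omega
    simp only [entry, dif_pos hp]
    have : (⟨pos - 1, hp⟩ : Fin n) = σ.symm ⟨i - 1, hilt⟩ := by
      apply Fin.ext; simp [hposdef]
    rw [this, Equiv.apply_symm_apply]
    simp; omega
  -- position sets
  set A : Finset ℕ := (Des σ).filter
    (fun m => pos < m ∧ entry σ (m + 1) < i ∧ i < entry σ m) with hA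
  set B : Finset ℕ := (Des σ).filter
    (fun m => m + 1 < pos ∧ entry σ (m + 1) < i ∧ i < entry σ m) with hB
  set C : Finset ℕ := (Des σ).filter (fun m => entry σ m ≤ i) with hC
  set E : Finset ℕ := (Des σ).filter (fun m => entry σ (m + 1) < i) with hE
  have memDes : ∀ m ∈ Des σ, (1 ≤ m ∧ m ≤ n - 1) ∧ entry σ (m + 1) < entry σ m :=
    fun m hm => (mem_Des_iff σ m).mp hm
  -- occ2_31at = |A|
  have h1 : occ2_31at σ i = A.card := by
    apply Finset.card_bij (fun p _ => p.2)
    · rintro ⟨j, m⟩ hp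
      simp only [Finset.mem_filter, Finset.mem_product, Finset.mem_Icc] at hp
      obtain ⟨⟨hj, hm⟩, hjm, hdes, hb, hji, hit⟩ := hp
      have hjpos : j = pos := entry_injOn σ hj.1 (by omega) hpos1 hposn
        (by rw [hji, hpos_entry])
      simp only [hA, Finset.mem_filter, mem_Des_iff]
      refine ⟨⟨⟨hm.1, hm.2⟩, hdes⟩, by omega, by rwa [← hji], hit⟩
    · rintro ⟨j, m⟩ hp ⟨j', m'⟩ hp' h
      simp only at h
      simp only [Finset.mem_filter, Finset.mem_product, Finset.mem_Icc] at hp hp'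
      have hjpos : j = pos := entry_injOn σ hp.1.1.1 (by omega) hpos1 hposn
        (by rw [hp.2.2.2.2.1, hpos_entry])
      have hjpos' : j' = pos := entry_injOn σ hp'.1.1.1 (by omega) hpos1 hposn
        (by rw [hp'.2.2.2.2.1, hpos_entry])
      simp [hjpos, hjpos', h]
    · intro m hm
      simp only [hA, Finset.mem_filter, mem_Des_iff] at hm
      obtain ⟨⟨hm1, hdes⟩, hpm, hb, ht⟩ := hm
      refine ⟨⟨pos, m⟩, ?_, rfl⟩
      simp only [Finset.mem_filter, Finset.mem_product, Finset.mem_Icc]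
      exact ⟨⟨⟨hpos1, by omega⟩, hm1⟩, hpm, hdes, by rwa [hpos_entry], hpos_entry, ht⟩
  -- occ31_2at = |B|
  have h2 : occ31_2at σ i = B.card := by
    apply Finset.card_bij (fun p _ => p.1)
    · rintro ⟨m, j⟩ hp
      simp only [Finset.mem_filter, Finset.mem_product, Finset.mem_Icc] at hp
      obtain ⟨⟨hm, hj⟩, hmj, hdes, hb, hji, hit⟩ := hp
      have hjpos : j = pos := entry_injOn σ hj.1 hj.2 hpos1 hposn
        (by rw [hji, hpos_entry])
      simp only [hB, Finset.mem_filter, mem_Des_iff]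
      refine ⟨⟨⟨hm.1, hm.2⟩, hdes⟩, by omega, by rwa [← hji], hit⟩
    · rintro ⟨m, j⟩ hp ⟨m', j'⟩ hp' h
      simp only at h
      simp only [Finset.mem_filter, Finset.mem_product, Finset.mem_Icc] at hp hp'
      have hjpos : j = pos := entry_injOn σ hp.1.2.1 hp.1.2.2 hpos1 hposn
        (by rw [hp.2.2.2.2.1, hpos_entry])
      have hjpos' : j' = pos := entry_injOn σ hp'.1.2.1 hp'.1.2.2 hpos1 hposn
        (by rw [hp'.2.2.2.2.1, hpos_entry])
      simp [hjpos, hjpos', h]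
    · intro m hm
      simp only [hB, Finset.mem_filter, mem_Des_iff] at hm
      obtain ⟨⟨hm1, hdes⟩, hpm, hb, ht⟩ := hm
      refine ⟨⟨m, pos⟩, ?_, rfl⟩
      simp only [Finset.mem_filter, Finset.mem_product, Finset.mem_Icc]
      exact ⟨⟨⟨hm1.1, hm1.2⟩, hpos1, hposn⟩, hpm, hdes, by rwa [hpos_entry], hpos_entry, ht⟩
  -- Destop filter = |C|
  have h3 : ((Destop σ).filter (fun t => t ≤ i)).card = C.card := by
    rw [Destop, Finset.filter_image]
    apply Finset.card_image_of_injOn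
    intro a ha b hb h
    simp only [Finset.coe_filter, Set.mem_setOf_eq] at ha hb
    have ha' := memDes a ha.1
    have hb' := memDes b hb.1
    exact entry_injOn σ ha'.1.1 (by omega) hb'.1.1 (by omega) h
  -- Desbot filter = |E|
  have h4 : ((Desbot σ).filter (fun b => b < i)).card = E.card := by
    rw [Desbot, Finset.filter_image]
    apply Finset.card_image_of_injOn
    intro a ha b hb h
    simp only [Finset.coe_filter, Set.mem_setOf_eq] at ha hb
    have ha' := memDes a ha.1
    have hb' := memDes b hb.1
    have hn1 : 1 ≤ n := by omega
    have := entry_injOn σ (a := a + 1) (b := b + 1) (by omega) (by omega)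
      (by omega) (by omega) h
    omega
  rw [h1, h2, h3, h4]
  -- now a partition argument
  have hAB : Disjoint A B := by
    rw [Finset.disjoint_left]
    intro m hmA hmB
    simp only [hA, hB, Finset.mem_filter] at hmA hmB
    omega
  have hABC : Disjoint (A ∪ B) C := by
    rw [Finset.disjoint_left]
    intro m hmAB hmC
    simp only [hA, hB, hC, Finset.mem_union, Finset.mem_filter] at hmAB hmC
    omega
  have hunion : A ∪ B ∪ C = E := by
    ext m
    simp only [hA, hB, hC, hE, Finset.mem_union, Finset.mem_filter]
    constructor
    · rintro ((⟨hm, _, hb, _⟩ | ⟨hm, _, hb, _⟩) | ⟨hm, ht⟩)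
      · exact ⟨hm, hb⟩
      · exact ⟨hm, hb⟩
      · exact ⟨hm, lt_of_lt_of_le ((memDes m hm).2) ht⟩
    · rintro ⟨hm, hb⟩
      by_cases ht : entry σ m ≤ i
      · exact Or.inr ⟨hm, ht⟩
      · push_neg at ht
        have hm' := memDes m hm
        have hne1 : pos ≠ m := by
          intro h; rw [← h, hpos_entry] at ht; omega
        have hne2 : pos ≠ m + 1 := by
          intro h; rw [← h, hpos_entry] at hb; omega
        rcases (by omega : pos < m ∨ m + 1 < pos) with h | h
        · exact Or.inl (Or.inl ⟨hm, h, hb, ht⟩)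
        · exact Or.inl (Or.inr ⟨hm, h, hb, ht⟩)
  rw [← hunion, Finset.card_union_of_disjoint hABC, Finset.card_union_of_disjoint hAB]
end

section
/- For every n ≥ 0, all sets T, B ⊆ [n], and all nonnegative integers a, b, the number of permutations σ ∈ S_n with Destop(σ) = T, Desbot(σ) = B, (2-31)σ = a, and (31-2)σ = b equals the number of permutations σ ∈ S_n with Destop(σ) = T, Desbot(σ) = B, (2-31)σ = b, and (31-2)σ = a. That is, the pairs of statistics (2-31, 31-2) and (31-2, 2-31) are jointly equidistributed on the set of permutations of [n] with fixed descent top set and fixed descent bottom set. -/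
open scoped Classical

namespace PF

def dIdx (L : List ℕ) : Finset ℕ :=
  (Finset.range (L.length - 1)).filter (fun i => L.getD (i+1) 0 < L.getD i 0)

def DTl (L : List ℕ) : Finset ℕ := (dIdx L).image (fun i => L.getD i 0)
def DBl (L : List ℕ) : Finset ℕ := (dIdx L).image (fun i => L.getD (i+1) 0)

def strIdx (L : List ℕ) (v : ℕ) : Finset ℕ :=
  (dIdx L).filter (fun i => L.getD (i+1) 0 < v ∧ v < L.getD i 0)

noncomputable def fstat (L : List ℕ) (v : ℕ) : ℕ :=
  ((strIdx L v).filter (fun i => i + 1 < List.idxOf v L)).card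

noncomputable def gstat (L : List ℕ) (v : ℕ) : ℕ :=
  ((strIdx L v).filter (fun i => List.idxOf v L < i)).card

def capf (T B : Finset ℕ) (v : ℕ) : ℕ :=
  (B.filter (fun b => b < v)).card - (T.filter (fun t => t ≤ v)).card

def Validf (S T B : Finset ℕ) (f : ℕ → ℕ) : Prop :=
  T ⊆ S ∧ B ⊆ S ∧ T.card = B.card ∧
    (∀ v ∈ S, (T.filter (fun t => t ≤ v)).card ≤ (B.filter (fun b => b < v)).card) ∧
    (∀ v ∈ S, f v ≤ capf T B v)

def Goodl (L : List ℕ) : Prop := L.Nodup ∧ ∀ x ∈ L, 0 < x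

lemma mem_dIdx {L : List ℕ} {i : ℕ} :
    i ∈ dIdx L ↔ i + 1 < L.length ∧ L.getD (i+1) 0 < L.getD i 0 := by
  simp only [dIdx, Finset.mem_filter, Finset.mem_range]
  constructor
  · rintro ⟨h1, h2⟩; exact ⟨by omega, h2⟩
  · rintro ⟨h1, h2⟩; exact ⟨by omega, h2⟩

lemma getD_mem {L : List ℕ} {i : ℕ} (h : i < L.length) : L.getD i 0 ∈ L := by
  rw [List.getD_eq_getElem L 0 h]; exact List.getElem_mem h

lemma getD_inj {L : List ℕ} (hL : L.Nodup) {i j : ℕ} (hi : i < L.length) (hj : j < L.length)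
    (h : L.getD i 0 = L.getD j 0) : i = j := by
  rw [List.getD_eq_getElem L 0 hi, List.getD_eq_getElem L 0 hj] at h
  exact (List.Nodup.getElem_inj_iff hL).mp h

lemma indexOf_lt {L : List ℕ} {v : ℕ} (h : v ∈ L) : List.idxOf v L < L.length :=
  List.idxOf_lt_length_iff.mpr h

lemma getD_indexOf {L : List ℕ} {v : ℕ} (h : v ∈ L) : L.getD (List.idxOf v L) 0 = v := by
  rw [List.getD_eq_getElem L 0 (indexOf_lt h)]; exact List.getElem_idxOf (indexOf_lt h)

lemma indexOf_eq {L : List ℕ} (hL : L.Nodup) {v i : ℕ} (hi : i < L.length)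
    (h : L.getD i 0 = v) : List.idxOf v L = i := by
  have hv : v ∈ L := h ▸ getD_mem hi
  exact getD_inj hL (indexOf_lt hv) hi (by rw [getD_indexOf hv, h])

lemma DTl_subset {L : List ℕ} : ∀ x ∈ DTl L, x ∈ L := by
  intro x hx
  simp only [DTl, Finset.mem_image] at hx
  obtain ⟨i, hi, rfl⟩ := hx
  have := mem_dIdx.mp hi
  exact getD_mem (by omega)

lemma DBl_subset {L : List ℕ} : ∀ x ∈ DBl L, x ∈ L := by
  intro x hx
  simp only [DBl, Finset.mem_image] at hx
  obtain ⟨i, hi, rfl⟩ := hx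
  have := mem_dIdx.mp hi
  exact getD_mem (by omega)

lemma dIdx_top_injOn {L : List ℕ} (hL : L.Nodup) :
    Set.InjOn (fun i => L.getD i 0) (dIdx L) := by
  intro i hi j hj h
  have hi' := mem_dIdx.mp hi; have hj' := mem_dIdx.mp hj
  exact getD_inj hL (by omega) (by omega) h

lemma dIdx_bot_injOn {L : List ℕ} (hL : L.Nodup) :
    Set.InjOn (fun i => L.getD (i+1) 0) (dIdx L) := by
  intro i hi j hj h
  have hi' := mem_dIdx.mp hi; have hj' := mem_dIdx.mp hj
  have := getD_inj hL (i := i+1) (j := j+1) (by omega) (by omega) h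
  omega

lemma card_T_filter {L : List ℕ} (hL : L.Nodup) (v : ℕ) :
    ((DTl L).filter (fun t => t ≤ v)).card
      = ((dIdx L).filter (fun i => L.getD i 0 ≤ v)).card := by
  rw [DTl, Finset.filter_image]
  exact Finset.card_image_of_injOn (Set.InjOn.mono (Finset.filter_subset _ _) (dIdx_top_injOn hL))

lemma card_B_filter {L : List ℕ} (hL : L.Nodup) (v : ℕ) :
    ((DBl L).filter (fun b => b < v)).card
      = ((dIdx L).filter (fun i => L.getD (i+1) 0 < v)).card := by
  rw [DBl, Finset.filter_image]
  exact Finset.card_image_of_injOn (Set.InjOn.mono (Finset.filter_subset _ _) (dIdx_bot_injOn hL))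

lemma card_T_le_card_B {L : List ℕ} (hL : L.Nodup) (v : ℕ) :
    ((DTl L).filter (fun t => t ≤ v)).card ≤ ((DBl L).filter (fun b => b < v)).card := by
  rw [card_T_filter hL, card_B_filter hL]
  apply Finset.card_le_card
  intro i hi
  rw [Finset.mem_filter] at hi ⊢
  have := mem_dIdx.mp hi.1
  exact ⟨hi.1, by omega⟩

lemma strIdx_card {L : List ℕ} (hL : L.Nodup) (v : ℕ) :
    (strIdx L v).card = capf (DTl L) (DBl L) v := by
  rw [capf, card_T_filter hL, card_B_filter hL]
  have h1 : (dIdx L).filter (fun i => L.getD i 0 ≤ v)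
      ⊆ (dIdx L).filter (fun i => L.getD (i+1) 0 < v) := by
    intro i hi
    rw [Finset.mem_filter] at hi ⊢
    have := mem_dIdx.mp hi.1
    exact ⟨hi.1, by omega⟩
  have h2 : strIdx L v
      = (dIdx L).filter (fun i => L.getD (i+1) 0 < v) \ (dIdx L).filter (fun i => L.getD i 0 ≤ v) := by
    ext i
    simp only [strIdx, Finset.mem_filter, Finset.mem_sdiff, not_and, not_le]
    constructor
    · rintro ⟨h, h1', h2'⟩; exact ⟨⟨h, h1'⟩, fun _ => h2'⟩
    · rintro ⟨⟨h, h1'⟩, h2'⟩; exact ⟨h, h1', h2' h⟩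
  rw [h2, Finset.card_sdiff_of_subset h1]

lemma fg_split {L : List ℕ} (hL : L.Nodup) {v : ℕ} (hv : v ∈ L) :
    fstat L v + gstat L v = (strIdx L v).card := by
  rw [fstat, gstat]
  have heq : (strIdx L v).filter (fun i => List.idxOf v L < i)
      = (strIdx L v).filter (fun i => ¬ (i + 1 < List.idxOf v L)) := by
    apply Finset.filter_congr
    intro i hi
    simp only [strIdx, Finset.mem_filter] at hi
    obtain ⟨hid, h1, h2⟩ := hi
    have hil := mem_dIdx.mp hid
    have hgv : L.getD (List.idxOf v L) 0 = v := getD_indexOf hv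
    have hi1 : i ≠ List.idxOf v L := by intro h; rw [h, hgv] at h2; omega
    have hi2 : i + 1 ≠ List.idxOf v L := by intro h; rw [h, hgv] at h1; omega
    constructor
    · intro h; omega
    · intro h; omega
  rw [heq]
  exact Finset.card_filter_add_card_filter_not (s := strIdx L v)
    (p := fun i => i + 1 < List.idxOf v L)


section Append

variable {M : List ℕ} {z : ℕ}

lemma getD_append_lt {i : ℕ} (h : i < M.length) : (M ++ [z]).getD i 0 = M.getD i 0 :=
  List.getD_append M [z] 0 i h

lemma getD_append_len : (M ++ [z]).getD M.length 0 = z := by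
  rw [List.getD_eq_getElem (M ++ [z]) 0 (by simp)]
  exact List.getElem_concat_length rfl (by simp)

lemma indexOf_append_left {v : ℕ} (h : v ∈ M) :
    List.idxOf v (M ++ [z]) = List.idxOf v M := by
  induction M with
  | nil => simp at h
  | cons a M ih =>
    rcases List.mem_cons.mp h with rfl | h'
    · simp [List.idxOf_cons_self]
    · by_cases hav : v = a
      · subst hav; simp [List.idxOf_cons_self]
      · rw [List.cons_append, List.idxOf_cons_ne _ (fun hh => hav hh.symm),
          List.idxOf_cons_ne _ (fun hh => hav hh.symm), ih h']

lemma indexOf_append_self (h : z ∉ M) :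
    List.idxOf z (M ++ [z]) = M.length := by
  induction M with
  | nil => simp
  | cons a M ih =>
    have haz : z ≠ a := fun hh => h (hh ▸ List.mem_cons_self)
    rw [List.cons_append, List.idxOf_cons_ne _ (fun hh => haz hh.symm)]
    rw [ih (fun hh => h (List.mem_cons_of_mem a hh))]
    simp

lemma mem_dIdx_append {i : ℕ} :
    i ∈ dIdx (M ++ [z]) ↔ i ∈ dIdx M ∨ (i + 1 = M.length ∧ z < M.getD i 0) := by
  rw [mem_dIdx, mem_dIdx]
  constructor
  · rintro ⟨h1, h2⟩
    simp only [List.length_append, List.length_singleton] at h1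
    rcases Nat.lt_or_ge (i+1) M.length with h | h
    · left
      rw [getD_append_lt (by omega : i + 1 < M.length)] at h2
      rw [getD_append_lt (by omega : i < M.length)] at h2
      exact ⟨h, h2⟩
    · right
      have hieq : i + 1 = M.length := by omega
      rw [hieq, getD_append_len, getD_append_lt (by omega)] at h2
      exact ⟨hieq, h2⟩
  · rintro (⟨h1, h2⟩ | ⟨h1, h2⟩)
    · refine ⟨by simp; omega, ?_⟩
      rw [getD_append_lt (by omega : i + 1 < M.length)]
      rw [getD_append_lt (by omega : i < M.length)]; exact h2
    · refine ⟨by simp; omega, ?_⟩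
      rw [h1, getD_append_len, getD_append_lt (by omega)]; exact h2

lemma dIdx_append_subset : dIdx M ⊆ dIdx (M ++ [z]) := fun i hi =>
  mem_dIdx_append.mpr (Or.inl hi)

/-- Case N: no new descent. -/
lemma dIdx_append_of_no (hno : M = [] ∨ M.getD (M.length - 1) 0 < z) :
    dIdx (M ++ [z]) = dIdx M := by
  ext i
  rw [mem_dIdx_append]
  constructor
  · rintro (h | ⟨h1, h2⟩)
    · exact h
    · exfalso
      rcases hno with rfl | hlt
      · simp at h1
      · have : M.length - 1 = i := by omega
        rw [this] at hlt; omega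
  · exact Or.inl

/-- Case D: new descent at index `M.length - 1`. -/
lemma dIdx_append_of_desc (hM : M ≠ []) (hlt : z < M.getD (M.length - 1) 0) :
    dIdx (M ++ [z]) = insert (M.length - 1) (dIdx M) := by
  have hlen : 0 < M.length := List.length_pos_iff.mpr hM
  ext i
  rw [mem_dIdx_append, Finset.mem_insert]
  constructor
  · rintro (h | ⟨h1, h2⟩)
    · exact Or.inr h
    · left; omega
  · rintro (rfl | h)
    · exact Or.inr ⟨by omega, hlt⟩
    · exact Or.inl h

lemma lastIdx_not_mem_dIdx : ¬ (M.length - 1 ∈ dIdx M) := by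
  intro h
  have := mem_dIdx.mp h
  omega

lemma DTl_append_of_no (hno : M = [] ∨ M.getD (M.length - 1) 0 < z) :
    DTl (M ++ [z]) = DTl M := by
  rw [DTl, DTl, dIdx_append_of_no hno]
  apply Finset.image_congr
  intro i hi
  have := mem_dIdx.mp hi
  exact getD_append_lt (by omega)

lemma DBl_append_of_no (hno : M = [] ∨ M.getD (M.length - 1) 0 < z) :
    DBl (M ++ [z]) = DBl M := by
  rw [DBl, DBl, dIdx_append_of_no hno]
  apply Finset.image_congr
  intro i hi
  have := mem_dIdx.mp hi
  exact getD_append_lt (by omega)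

lemma DTl_append_of_desc (hM : M ≠ []) (hlt : z < M.getD (M.length - 1) 0) :
    DTl (M ++ [z]) = insert (M.getD (M.length - 1) 0) (DTl M) := by
  have hlen : 0 < M.length := List.length_pos_iff.mpr hM
  rw [DTl, DTl, dIdx_append_of_desc hM hlt, Finset.image_insert,
    getD_append_lt (by omega)]
  congr 1
  apply Finset.image_congr
  intro i hi
  have := mem_dIdx.mp hi
  exact getD_append_lt (by omega)

lemma DBl_append_of_desc (hM : M ≠ []) (hlt : z < M.getD (M.length - 1) 0) :
    DBl (M ++ [z]) = insert z (DBl M) := by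
  have hlen : 0 < M.length := List.length_pos_iff.mpr hM
  rw [DBl, DBl, dIdx_append_of_desc hM hlt, Finset.image_insert]
  have h' : M.length - 1 + 1 = M.length := by omega
  rw [h', getD_append_len]
  congr 1
  apply Finset.image_congr
  intro i hi
  have := mem_dIdx.mp hi
  exact getD_append_lt (by omega)

lemma strIdx_append_eq {v : ℕ} (hv : ¬ (z < v ∧ v < M.getD (M.length - 1) 0) ∨ M = []) :
    strIdx (M ++ [z]) v = strIdx M v := by
  ext i
  simp only [strIdx, Finset.mem_filter, mem_dIdx_append]
  constructor
  · rintro ⟨h | ⟨h1, h2⟩, hc1, hc2⟩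
    · have := mem_dIdx.mp h
      rw [getD_append_lt (by omega : i + 1 < M.length)] at hc1
      rw [getD_append_lt (by omega : i < M.length)] at hc2
      exact ⟨h, hc1, hc2⟩
    · exfalso
      rcases hv with hv | rfl
      · rw [h1, getD_append_len] at hc1
        rw [getD_append_lt (by omega)] at hc2
        have : M.length - 1 = i := by omega
        rw [this] at hv
        exact hv ⟨hc1, hc2⟩
      · simp at h1
  · rintro ⟨h, hc1, hc2⟩
    have := mem_dIdx.mp h
    rw [← getD_append_lt (i := i+1) (z := z) (by omega)] at hc1
    rw [← getD_append_lt (i := i) (z := z) (by omega)] at hc2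
    exact ⟨Or.inl h, hc1, hc2⟩

lemma strIdx_append_mem {v : ℕ} {i : ℕ} (h : i ∈ strIdx (M ++ [z]) v) :
    i ∈ strIdx M v ∨ (i + 1 = M.length ∧ z < v ∧ v < M.getD i 0) := by
  simp only [strIdx, Finset.mem_filter, mem_dIdx_append] at h
  obtain ⟨h | ⟨h1, h2⟩, hc1, hc2⟩ := h
  · left
    have := mem_dIdx.mp h
    rw [getD_append_lt (by omega : i + 1 < M.length)] at hc1
    rw [getD_append_lt (by omega : i < M.length)] at hc2
    simp only [strIdx, Finset.mem_filter]
    exact ⟨h, hc1, hc2⟩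
  · right
    rw [h1, getD_append_len] at hc1
    rw [getD_append_lt (by omega)] at hc2
    exact ⟨h1, hc1, hc2⟩

lemma fstat_append {v : ℕ} (hv : v ∈ M) (hz : z ∉ M) :
    fstat (M ++ [z]) v = fstat M v := by
  rw [fstat, fstat, indexOf_append_left hv]
  congr 1
  ext i
  simp only [Finset.mem_filter]
  constructor
  · rintro ⟨h1, h2⟩
    rcases strIdx_append_mem h1 with h | ⟨hlen, _⟩
    · exact ⟨h, h2⟩
    · exfalso
      have := indexOf_lt hv
      omega
  · rintro ⟨h1, h2⟩
    refine ⟨?_, h2⟩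
    simp only [strIdx, Finset.mem_filter] at h1 ⊢
    obtain ⟨h, hc1, hc2⟩ := h1
    have := mem_dIdx.mp h
    rw [← getD_append_lt (i := i+1) (z := z) (by omega)] at hc1
    rw [← getD_append_lt (i := i) (z := z) (by omega)] at hc2
    exact ⟨dIdx_append_subset h, hc1, hc2⟩

lemma fstat_append_self (hz : z ∉ M) :
    fstat (M ++ [z]) z = (strIdx (M ++ [z]) z).card := by
  rw [fstat, indexOf_append_self hz]
  congr 1
  apply Finset.filter_true_of_mem
  intro i hi
  rcases strIdx_append_mem hi with h | ⟨h1, h2, h3⟩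
  · have := mem_dIdx.mp ((Finset.mem_filter.mp h).1)
    omega
  · omega

lemma gstat_append_self (hz : z ∉ M) : gstat (M ++ [z]) z = 0 := by
  rw [gstat, Finset.card_eq_zero, Finset.filter_eq_empty_iff]
  intro i hi
  rw [indexOf_append_self hz]
  rcases strIdx_append_mem hi with h | ⟨h1, h2, h3⟩
  · have := mem_dIdx.mp ((Finset.mem_filter.mp h).1)
    omega
  · omega

lemma getLast_not_mem_DTl (hz : z ∉ M) : z ∉ DTl (M ++ [z]) := by
  intro h
  simp only [DTl, Finset.mem_image] at h
  obtain ⟨i, hi, hgi⟩ := h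
  rcases mem_dIdx_append.mp hi with h | ⟨h1, h2⟩
  · have hi' := mem_dIdx.mp h
    rw [getD_append_lt (by omega)] at hgi
    exact hz (hgi ▸ getD_mem (by omega))
  · rw [getD_append_lt (by omega)] at hgi
    rw [hgi] at h2
    omega

end Append

lemma goodl_append {M : List ℕ} {z : ℕ} (h : Goodl (M ++ [z])) :
    Goodl M ∧ z ∉ M ∧ 0 < z := by
  obtain ⟨hnd, hpos⟩ := h
  rw [List.nodup_append] at hnd
  refine ⟨⟨hnd.1, fun x hx => hpos x (List.mem_append_left _ hx)⟩, ?_, ?_⟩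
  · intro hzM
    exact hnd.2.2 z hzM z (List.mem_singleton_self z) rfl
  · exact hpos z (List.mem_append_right _ (List.mem_singleton_self z))

/-- Z2: any non-descent-top value bigger than the last letter has positive gstat. -/
lemma gstat_pos_of_gt {M : List ℕ} {z v : ℕ} (hG : Goodl (M ++ [z]))
    (hv : v ∈ M) (hzv : z < v) (hT : v ∉ DTl (M ++ [z])) :
    0 < gstat (M ++ [z]) v := by
  set L := M ++ [z] with hLdef
  have hnd : L.Nodup := hG.1
  have hvL : v ∈ L := List.mem_append_left _ hv
  set k := List.idxOf v L with hk
  have hkM : k < M.length := by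
    rw [hk, hLdef, indexOf_append_left hv]
    exact indexOf_lt hv
  have hgk : L.getD k 0 = v := getD_indexOf hvL
  have hlen : L.length = M.length + 1 := by simp [hLdef]
  have hwit : L.getD M.length 0 < v := by rw [hLdef, getD_append_len]; exact hzv
  have hex : ∃ j, k < j ∧ L.getD j 0 < v := ⟨M.length, hkM, hwit⟩
  classical
  obtain ⟨j, hspec, hmin⟩ : ∃ j, (k < j ∧ L.getD j 0 < v) ∧
      ∀ m, m < j → ¬ (k < m ∧ L.getD m 0 < v) :=
    ⟨Nat.find hex, Nat.find_spec hex, fun m hm => Nat.find_min hex hm⟩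
  obtain ⟨hkj, hjv⟩ := hspec
  have hjle : j ≤ M.length := by
    by_contra hcon
    exact hmin M.length (by omega) ⟨hkM, hwit⟩
  rcases Nat.lt_or_ge k (j - 1) with hcase | hcase
  · -- i := j - 1 > k : straddling descent right of v
    have hji : j - 1 + 1 = j := by omega
    have h1 : v ≤ L.getD (j-1) 0 := by
      by_contra hcon
      exact hmin (j-1) (by omega) ⟨hcase, by omega⟩
    have hne : L.getD (j-1) 0 ≠ v := by
      intro heq
      have := getD_inj hnd (i := j-1) (j := k) (by omega) (by omega) (by rw [heq, hgk])
      omega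
    have hstr : j - 1 ∈ strIdx L v := by
      simp only [strIdx, Finset.mem_filter]
      refine ⟨mem_dIdx.mpr ⟨by omega, ?_⟩, ?_, by omega⟩
      · rw [hji]; omega
      · rw [hji]; exact hjv
    rw [gstat, Finset.card_pos]
    exact ⟨j - 1, Finset.mem_filter.mpr ⟨hstr, by rw [← hk]; omega⟩⟩
  · -- j = k + 1 : v itself is a descent top, contradiction
    exfalso
    apply hT
    have hjk : j = k + 1 := by omega
    simp only [DTl, Finset.mem_image]
    refine ⟨k, mem_dIdx.mpr ⟨by omega, ?_⟩, hgk⟩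
    rw [← hjk, hgk]
    exact hjv

/-- W1: the top of the final descent has gstat 0. -/
lemma gstat_last_desc_top {M : List ℕ} {z : ℕ} (hG : Goodl (M ++ [z]))
    (hM : M ≠ []) (hlt : z < M.getD (M.length - 1) 0) :
    gstat (M ++ [z]) (M.getD (M.length - 1) 0) = 0 := by
  obtain ⟨hGM, hzM, hz⟩ := goodl_append hG
  have hlen : 0 < M.length := List.length_pos_iff.mpr hM
  set w := M.getD (M.length - 1) 0 with hw
  have hwM : w ∈ M := getD_mem (by omega)
  have hidx : List.idxOf w (M ++ [z]) = M.length - 1 := by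
    rw [indexOf_append_left hwM]
    exact indexOf_eq hGM.1 (by omega) rfl
  rw [gstat, Finset.card_eq_zero, Finset.filter_eq_empty_iff]
  intro i hi
  rw [hidx]
  have hii : i ∈ dIdx (M ++ [z]) := (Finset.mem_filter.mp hi).1
  rw [dIdx_append_of_desc hM hlt] at hii
  rcases Finset.mem_insert.mp hii with rfl | h
  · omega
  · have := mem_dIdx.mp h
    omega

/-- W2: values strictly between `z` and the final descent top have positive gstat. -/
lemma gstat_pos_of_between {M : List ℕ} {z t : ℕ} (hG : Goodl (M ++ [z]))
    (hM : M ≠ []) (hlt : z < M.getD (M.length - 1) 0)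
    (ht : t ∈ M) (hzt : z < t) (htw : t < M.getD (M.length - 1) 0) :
    0 < gstat (M ++ [z]) t := by
  obtain ⟨hGM, hzM, hz⟩ := goodl_append hG
  have hlen : 0 < M.length := List.length_pos_iff.mpr hM
  have hidx : List.idxOf t (M ++ [z]) = List.idxOf t M := indexOf_append_left ht
  have hidxlt : List.idxOf t M < M.length := indexOf_lt ht
  have hne : List.idxOf t M ≠ M.length - 1 := by
    intro h
    have : M.getD (M.length - 1) 0 = t := by rw [← h]; exact getD_indexOf ht
    omega
  have hstr : M.length - 1 ∈ strIdx (M ++ [z]) t := by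
    simp only [strIdx, Finset.mem_filter]
    have h1 : M.length - 1 + 1 = M.length := by omega
    refine ⟨?_, ?_, ?_⟩
    · rw [dIdx_append_of_desc hM hlt]; exact Finset.mem_insert_self _ _
    · rw [h1, getD_append_len]; exact hzt
    · rw [getD_append_lt (by omega)]; exact htw
  rw [gstat, Finset.card_pos]
  exact ⟨M.length - 1, Finset.mem_filter.mpr ⟨hstr, by rw [hidx]; omega⟩⟩


lemma gstat_fg {L : List ℕ} (hG : Goodl L) {v : ℕ} (hv : v ∈ L) :
    fstat L v + gstat L v = capf (DTl L) (DBl L) v := by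
  rw [fg_split hG.1 hv, strIdx_card hG.1]

lemma fstat_le {L : List ℕ} (hG : Goodl L) (v : ℕ) :
    fstat L v ≤ capf (DTl L) (DBl L) v := by
  rw [← strIdx_card hG.1]
  exact Finset.card_le_card (Finset.filter_subset _ _)

lemma data_valid {L : List ℕ} (hG : Goodl L) :
    Validf L.toFinset (DTl L) (DBl L) (fstat L) := by
  refine ⟨?_, ?_, ?_, ?_, ?_⟩
  · intro x hx; exact List.mem_toFinset.mpr (DTl_subset x hx)
  · intro x hx; exact List.mem_toFinset.mpr (DBl_subset x hx)
  · rw [DTl, DBl, Finset.card_image_of_injOn (dIdx_top_injOn hG.1),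
      Finset.card_image_of_injOn (dIdx_bot_injOn hG.1)]
  · intro v _; exact card_T_le_card_B hG.1 v
  · intro v _; exact fstat_le hG v

lemma toFinset_concat {M : List ℕ} {z : ℕ} :
    (M ++ [z]).toFinset = insert z M.toFinset := by
  ext x
  simp only [List.toFinset_append, List.toFinset_cons, List.toFinset_nil,
    Finset.mem_union, Finset.mem_insert, Finset.mem_singleton]
  tauto

lemma getD_last_concat {L₁ : List ℕ} {y : ℕ} :
    (L₁ ++ [y]).getD ((L₁ ++ [y]).length - 1) 0 = y := by
  have h : (L₁ ++ [y]).length - 1 = L₁.length := by simp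
  rw [h, getD_append_len]

lemma le_last {M : List ℕ} {z v : ℕ} (hG : Goodl (M ++ [z]))
    (hv : v ∈ (M ++ [z]).toFinset) (hT : v ∉ DTl (M ++ [z]))
    (hg : gstat (M ++ [z]) v = 0) : v ≤ z := by
  by_contra hcon
  have hvM : v ∈ M := by
    rcases List.mem_append.mp (List.mem_toFinset.mp hv) with h | h
    · exact h
    · simp at h; omega
  have := gstat_pos_of_gt hG hvM (by omega) hT
  omega

theorem core_unique : ∀ (N : ℕ) (L M : List ℕ), L.length ≤ N → Goodl L → Goodl M →
    L.toFinset = M.toFinset → DTl L = DTl M → DBl L = DBl M →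
    (∀ v ∈ L.toFinset, fstat L v = fstat M v) → L = M := by
  intro N
  induction N with
  | zero =>
    intro L M hlen hGL hGM hS _ _ _
    have hL : L = [] := List.length_eq_zero_iff.mp (by omega)
    subst hL
    have : M.toFinset = ∅ := by rw [← hS]; simp
    exact ((List.toFinset_eq_empty_iff M).mp this).symm
  | succ N ih =>
    intro L M hlen hGL hGM hS hT hB hf
    rcases List.eq_nil_or_concat L with rfl | ⟨L₀, z, hLc⟩
    · have : M.toFinset = ∅ := by rw [← hS]; simp
      exact ((List.toFinset_eq_empty_iff M).mp this).symm
    rw [List.concat_eq_append] at hLc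
    subst hLc
    rcases List.eq_nil_or_concat M with rfl | ⟨M₀, y, hMc⟩
    · exfalso
      have : (L₀ ++ [z]).toFinset = ∅ := by rw [hS]; simp
      rw [toFinset_concat] at this
      exact absurd this (Finset.insert_ne_empty _ _)
    rw [List.concat_eq_append] at hMc
    subst hMc
    obtain ⟨hGL₀, hzL₀, hz⟩ := goodl_append hGL
    obtain ⟨hGM₀, hyM₀, hy⟩ := goodl_append hGM
    -- gstat transfer
    have hmemiff : ∀ v, v ∈ L₀ ++ [z] ↔ v ∈ M₀ ++ [y] := by
      intro v
      rw [← List.mem_toFinset, ← List.mem_toFinset, hS]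
    have hgst : ∀ v ∈ (L₀ ++ [z]).toFinset, gstat (L₀ ++ [z]) v = gstat (M₀ ++ [y]) v := by
      intro v hv
      have h1 := gstat_fg hGL (List.mem_toFinset.mp hv)
      have h2 := gstat_fg hGM ((hmemiff v).mp (List.mem_toFinset.mp hv))
      rw [hT, hB] at h1
      have h3 := hf v hv
      omega
    -- z = y
    have hzy : z = y := by
      have h1 : z ≤ y := by
        apply le_last hGM (hS ▸ (List.mem_toFinset.mpr (List.mem_append_right _ (List.mem_singleton_self z))))
          (hT ▸ getLast_not_mem_DTl hzL₀)
        rw [← hgst z (List.mem_toFinset.mpr (List.mem_append_right _ (List.mem_singleton_self z)))]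
        exact gstat_append_self hzL₀
      have h2 : y ≤ z := by
        apply le_last hGL (hS ▸ (List.mem_toFinset.mpr (List.mem_append_right _ (List.mem_singleton_self y))))
          (hT ▸ getLast_not_mem_DTl hyM₀)
        rw [hgst y (hS ▸ (List.mem_toFinset.mpr (List.mem_append_right _ (List.mem_singleton_self y))))]
        exact gstat_append_self hyM₀
      omega
    subst hzy
    -- strip
    have hSsub : L₀.toFinset = M₀.toFinset := by
      have h1 : (L₀ ++ [z]).toFinset.erase z = L₀.toFinset := by
        rw [toFinset_concat, Finset.erase_insert (by simpa using hzL₀)]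
      have h2 : (M₀ ++ [z]).toFinset.erase z = M₀.toFinset := by
        rw [toFinset_concat, Finset.erase_insert (by simpa using hyM₀)]
      rw [← h1, ← h2, hS]
    have hlen₀ : L₀.length ≤ N := by
      have : (L₀ ++ [z]).length = L₀.length + 1 := by simp
      omega
    -- do we have the final descent?
    by_cases hdesc : L₀ ≠ [] ∧ z < L₀.getD (L₀.length - 1) 0
    · obtain ⟨hL₀ne, hltL⟩ := hdesc
      -- z ∈ DBl L, hence z ∈ DBl M, hence M has final descent too
      have hzDB : z ∈ DBl (M₀ ++ [z]) := by
        rw [← hB, DBl_append_of_desc hL₀ne hltL]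
        exact Finset.mem_insert_self _ _
      have hdescM : M₀ ≠ [] ∧ z < M₀.getD (M₀.length - 1) 0 := by
        by_contra hcon
        rw [not_and_or] at hcon
        have hno : M₀ = [] ∨ M₀.getD (M₀.length - 1) 0 < z := by
          rcases hcon with h | h
          · left; exact not_not.mp h
          · by_cases hM0 : M₀ = []
            · left; exact hM0
            · right
              have hne : M₀.getD (M₀.length - 1) 0 ≠ z := by
                intro heq
                apply hyM₀
                rw [← heq]
                exact getD_mem (by
                  have : 0 < M₀.length := List.length_pos_iff.mpr hM0
                  omega)
              omega
        rw [DBl_append_of_no hno] at hzDB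
        exact hyM₀ (DBl_subset z hzDB)
      obtain ⟨hM₀ne, hltM⟩ := hdescM
      set wL := L₀.getD (L₀.length - 1) 0 with hwL
      set wM := M₀.getD (M₀.length - 1) 0 with hwM
      have hwLmem : wL ∈ L₀ := getD_mem (by have : 0 < L₀.length := List.length_pos_iff.mpr hL₀ne; omega)
      have hwMmem : wM ∈ M₀ := getD_mem (by have : 0 < M₀.length := List.length_pos_iff.mpr hM₀ne; omega)
      -- wL = wM
      have hwLT : wL ∈ DTl (L₀ ++ [z]) := by
        rw [DTl_append_of_desc hL₀ne hltL]; exact Finset.mem_insert_self _ _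
      have hwMT : wM ∈ DTl (M₀ ++ [z]) := by
        rw [DTl_append_of_desc hM₀ne hltM]; exact Finset.mem_insert_self _ _
      have hgwL : gstat (L₀ ++ [z]) wL = 0 := gstat_last_desc_top hGL hL₀ne hltL
      have hgwM : gstat (M₀ ++ [z]) wM = 0 := gstat_last_desc_top hGM hM₀ne hltM
      have hww : wL = wM := by
        rcases Nat.lt_trichotomy wL wM with h | h | h
        · exfalso
          have hwLM₀ : wL ∈ M₀ := by
            rcases List.mem_append.mp ((hmemiff wL).mp (List.mem_append_left _ hwLmem)) with hh | hh
            · exact hh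
            · simp at hh; omega
          have := gstat_pos_of_between hGM hM₀ne hltM hwLM₀ hltL h
          have h0 : gstat (M₀ ++ [z]) wL = 0 := by
            rw [← hgst wL (List.mem_toFinset.mpr (List.mem_append_left _ hwLmem))]
            exact hgwL
          omega
        · exact h
        · exfalso
          have hwML₀ : wM ∈ L₀ := by
            rcases List.mem_append.mp ((hmemiff wM).mpr (List.mem_append_left _ hwMmem)) with hh | hh
            · exact hh
            · simp at hh; omega
          have := gstat_pos_of_between hGL hL₀ne hltL hwML₀ hltM h
          have h0 : gstat (L₀ ++ [z]) wM = 0 := by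
            rw [hgst wM (hS ▸ List.mem_toFinset.mpr (List.mem_append_left _ hwMmem))]
            exact hgwM
          omega
      -- wL not a descent top of L₀ (it is the last letter of L₀)
      have hwLnotT : wL ∉ DTl L₀ := by
        rcases List.eq_nil_or_concat L₀ with h | ⟨L₁, y₁, hc⟩
        · exact absurd h hL₀ne
        rw [List.concat_eq_append] at hc
        have hy₁ : y₁ = wL := by rw [hwL, hc, getD_last_concat]
        rw [hc, ← hy₁]
        exact getLast_not_mem_DTl (goodl_append (hc ▸ hGL₀)).2.1
      have hwMnotT : wM ∉ DTl M₀ := by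
        rcases List.eq_nil_or_concat M₀ with h | ⟨M₁, y₁, hc⟩
        · exact absurd h hM₀ne
        rw [List.concat_eq_append] at hc
        have hy₁ : y₁ = wM := by rw [hwM, hc, getD_last_concat]
        rw [hc, ← hy₁]
        exact getLast_not_mem_DTl (goodl_append (hc ▸ hGM₀)).2.1
      have hTsub : DTl L₀ = DTl M₀ := by
        have h1 : (DTl (L₀ ++ [z])).erase wL = DTl L₀ := by
          rw [DTl_append_of_desc hL₀ne hltL, Finset.erase_insert hwLnotT]
        have h2 : (DTl (M₀ ++ [z])).erase wM = DTl M₀ := by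
          rw [DTl_append_of_desc hM₀ne hltM, Finset.erase_insert hwMnotT]
        rw [← h1, ← h2, hT, hww]
      have hBsub : DBl L₀ = DBl M₀ := by
        have hzDBL : z ∉ DBl L₀ := fun h => hzL₀ (DBl_subset z h)
        have hzDBM : z ∉ DBl M₀ := fun h => hyM₀ (DBl_subset z h)
        have h1 : (DBl (L₀ ++ [z])).erase z = DBl L₀ := by
          rw [DBl_append_of_desc hL₀ne hltL, Finset.erase_insert hzDBL]
        have h2 : (DBl (M₀ ++ [z])).erase z = DBl M₀ := by
          rw [DBl_append_of_desc hM₀ne hltM, Finset.erase_insert hzDBM]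
        rw [← h1, ← h2, hB]
      have hfsub : ∀ v ∈ L₀.toFinset, fstat L₀ v = fstat M₀ v := by
        intro v hv
        have hvL₀ : v ∈ L₀ := List.mem_toFinset.mp hv
        have hvM₀ : v ∈ M₀ := by rw [← List.mem_toFinset, ← hSsub]; exact hv
        rw [← fstat_append hvL₀ hzL₀, ← fstat_append hvM₀ hyM₀]
        exact hf v (List.mem_toFinset.mpr (List.mem_append_left _ hvL₀))
      rw [ih L₀ M₀ hlen₀ hGL₀ hGM₀ hSsub hTsub hBsub hfsub]
    · -- no final descent in L; same in M
      rw [not_and_or] at hdesc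
      have hnoL : L₀ = [] ∨ L₀.getD (L₀.length - 1) 0 < z := by
        rcases hdesc with h | h
        · left; exact not_not.mp h
        · by_cases hL0 : L₀ = []
          · left; exact hL0
          · right
            have hne : L₀.getD (L₀.length - 1) 0 ≠ z := by
              intro heq
              apply hzL₀
              rw [← heq]
              exact getD_mem (by
                have : 0 < L₀.length := List.length_pos_iff.mpr hL0
                omega)
            omega
      have hzDB : z ∉ DBl (L₀ ++ [z]) := by
        rw [DBl_append_of_no hnoL]
        exact fun h => hzL₀ (DBl_subset z h)
      have hnoM : M₀ = [] ∨ M₀.getD (M₀.length - 1) 0 < z := by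
        by_contra hcon
        rw [not_or] at hcon
        obtain ⟨hM0, hge⟩ := hcon
        have hM₀pos : 0 < M₀.length := List.length_pos_iff.mpr hM0
        have hne : M₀.getD (M₀.length - 1) 0 ≠ z := by
          intro heq
          apply hyM₀
          rw [← heq]
          exact getD_mem (by omega)
        have hlt : z < M₀.getD (M₀.length - 1) 0 := by omega
        apply hzDB
        rw [hB, DBl_append_of_desc hM0 hlt]
        exact Finset.mem_insert_self _ _
      have hTsub : DTl L₀ = DTl M₀ := by
        rw [← DTl_append_of_no hnoL, ← DTl_append_of_no hnoM, hT]
      have hBsub : DBl L₀ = DBl M₀ := by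
        rw [← DBl_append_of_no hnoL, ← DBl_append_of_no hnoM, hB]
      have hfsub : ∀ v ∈ L₀.toFinset, fstat L₀ v = fstat M₀ v := by
        intro v hv
        have hvL₀ : v ∈ L₀ := List.mem_toFinset.mp hv
        have hvM₀ : v ∈ M₀ := by rw [← List.mem_toFinset, ← hSsub]; exact hv
        rw [← fstat_append hvL₀ hzL₀, ← fstat_append hvM₀ hyM₀]
        exact hf v (List.mem_toFinset.mpr (List.mem_append_left _ hvL₀))
      rw [ih L₀ M₀ hlen₀ hGL₀ hGM₀ hSsub hTsub hBsub hfsub]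


lemma card_filter_erase {T : Finset ℕ} {w : ℕ} (hw : w ∈ T) (p : ℕ → Prop) [DecidablePred p] :
    ((T.erase w).filter p).card = if p w then (T.filter p).card - 1 else (T.filter p).card := by
  rw [Finset.filter_erase]
  split
  · exact Finset.card_erase_of_mem (Finset.mem_filter.mpr ⟨hw, by assumption⟩)
  · rw [Finset.erase_eq_of_notMem (fun h => by exact absurd (Finset.mem_filter.mp h).2 (by assumption))]

lemma dIdx_nil : dIdx [] = ∅ := by simp [dIdx]
lemma DTl_nil : DTl [] = ∅ := by simp [DTl, dIdx_nil]
lemma DBl_nil : DBl [] = ∅ := by simp [DBl, dIdx_nil]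

theorem core_exists : ∀ (N : ℕ) (S T B : Finset ℕ) (f : ℕ → ℕ), S.card ≤ N →
    (∀ x ∈ S, 0 < x) → Validf S T B f →
    ∃ L, Goodl L ∧ L.toFinset = S ∧ DTl L = T ∧ DBl L = B ∧ ∀ v ∈ S, fstat L v = f v := by
  intro N
  induction N with
  | zero =>
    intro S T B f hcard hpos hV
    have hS : S = ∅ := Finset.card_eq_zero.mp (by omega)
    subst hS
    have hT : T = ∅ := Finset.subset_empty.mp hV.1
    have hB : B = ∅ := Finset.subset_empty.mp hV.2.1
    exact ⟨[], ⟨List.nodup_nil, by simp⟩, by simp, by rw [DTl_nil, hT], by rw [DBl_nil, hB], by simp⟩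
  | succ N ih =>
    intro S T B f hcardN hpos hV
    obtain ⟨hTS, hBS, hcard, hpt, hfle⟩ := hV
    rcases Finset.eq_empty_or_nonempty S with rfl | hS
    · have hT : T = ∅ := Finset.subset_empty.mp hTS
      have hB : B = ∅ := Finset.subset_empty.mp hBS
      exact ⟨[], ⟨List.nodup_nil, by simp⟩, by simp, by rw [DTl_nil, hT], by rw [DBl_nil, hB], by simp⟩
    -- the candidate set is nonempty: min S belongs to it
    set m := S.min' hS with hm
    have hmS : m ∈ S := S.min'_mem hS
    have hBm : B.filter (fun b => b < m) = ∅ := by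
      rw [Finset.filter_eq_empty_iff]
      intro b hb
      have := S.min'_le b (hBS hb)
      omega
    have hcapm : capf T B m = 0 := by
      rw [capf, hBm]
      simp
    have hmT : m ∉ T := by
      intro h
      have h1 := hpt m hmS
      rw [hBm] at h1
      simp only [Finset.card_empty, Nat.le_zero, Finset.card_eq_zero,
        Finset.filter_eq_empty_iff] at h1
      exact h1 h (le_refl m)
    have hfm : f m = capf T B m := by
      have := hfle m hmS
      omega
    have hcandne : (S.filter (fun v => v ∉ T ∧ f v = capf T B v)).Nonempty :=
      ⟨m, Finset.mem_filter.mpr ⟨hmS, hmT, hfm⟩⟩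
    have hzmem := (S.filter (fun v => v ∉ T ∧ f v = capf T B v)).max'_mem hcandne
    set z := (S.filter (fun v => v ∉ T ∧ f v = capf T B v)).max' hcandne with hzdef
    rw [Finset.mem_filter] at hzmem
    obtain ⟨hzS, hzT, hfz⟩ := hzmem
    have hzmax : ∀ v ∈ S, v ∉ T → f v = capf T B v → v ≤ z := by
      intro v hv h1 h2
      exact Finset.le_max' _ v (Finset.mem_filter.mpr ⟨hv, h1, h2⟩)
    have hz : 0 < z := hpos z hzS
    set S' := S.erase z with hS'def
    have hS'card : S'.card ≤ N := by
      rw [hS'def, Finset.card_erase_of_mem hzS]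
      have : 1 ≤ S.card := Finset.card_pos.mpr hS
      omega
    have hpos' : ∀ x ∈ S', 0 < x := fun x hx => hpos x (Finset.mem_of_mem_erase hx)
    by_cases hzB : z ∈ B
    · -- case: final descent (w, z)
      set mx := S.max' hS with hmx
      have hmxS : mx ∈ S := S.max'_mem hS
      have hTfull : ∀ v ∈ S, (∀ s ∈ S, s ≤ v) → (T.filter (fun t => t ≤ v)).card = T.card := by
        intro v _ hvmax
        rw [Finset.filter_true_of_mem (fun t ht => hvmax t (hTS ht))]
      have hBeraseCard : ∀ v ∈ S, v ∈ B → (∀ s ∈ S, s ≤ v) →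
          (B.filter (fun b => b < v)).card = B.card - 1 := by
        intro v _ hvB hvmax
        have : B.filter (fun b => b < v) = B.erase v := by
          ext b
          simp only [Finset.mem_filter, Finset.mem_erase]
          constructor
          · rintro ⟨hb, hlt⟩; exact ⟨by omega, hb⟩
          · rintro ⟨hne, hb⟩
            have := hvmax b (hBS hb)
            exact ⟨hb, by omega⟩
        rw [this, Finset.card_erase_of_mem hvB]
      have hzmx : z < mx := by
        rcases Nat.lt_or_ge z mx with h | h
        · exact h
        · exfalso
          have hzeq : z = mx := le_antisymm (S.le_max' z hzS) h
          have h1 := hpt z hzS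
          rw [hTfull z hzS (fun s hs => hzeq ▸ S.le_max' s hs),
            hBeraseCard z hzS hzB (fun s hs => hzeq ▸ S.le_max' s hs)] at h1
          have : 1 ≤ B.card := Finset.card_pos.mpr ⟨z, hzB⟩
          omega
      have hmxB : mx ∉ B := by
        intro h
        have h1 := hpt mx hmxS
        rw [hTfull mx hmxS (fun s hs => S.le_max' s hs),
          hBeraseCard mx hmxS h (fun s hs => S.le_max' s hs)] at h1
        have : 1 ≤ B.card := Finset.card_pos.mpr ⟨mx, h⟩
        omega
      have hcapmx : capf T B mx = 0 := by
        rw [capf]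
        have hBf : B.filter (fun b => b < mx) = B := by
          apply Finset.filter_true_of_mem
          intro b hb
          have h1 := S.le_max' b (hBS hb)
          have h2 : b ≠ mx := fun h => hmxB (h ▸ hb)
          omega
        rw [hBf, hTfull mx hmxS (fun s hs => S.le_max' s hs), hcard]
        omega
      have hfmx : f mx = capf T B mx := by
        have := hfle mx hmxS
        omega
      have hwsetne : (S.filter (fun t => z < t ∧ f t = capf T B t)).Nonempty :=
        ⟨mx, Finset.mem_filter.mpr ⟨hmxS, hzmx, hfmx⟩⟩
      have hwmem := (S.filter (fun t => z < t ∧ f t = capf T B t)).min'_mem hwsetne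
      set w := (S.filter (fun t => z < t ∧ f t = capf T B t)).min' hwsetne with hwdef
      rw [Finset.mem_filter] at hwmem
      obtain ⟨hwS, hzw, hfw⟩ := hwmem
      have hwmin : ∀ t ∈ S, z < t → f t = capf T B t → w ≤ t := by
        intro t ht h1 h2
        exact Finset.min'_le _ t (Finset.mem_filter.mpr ⟨ht, h1, h2⟩)
      have hwT : w ∈ T := by
        by_contra h
        have := hzmax w hwS h hfw
        omega
      have hmid : ∀ v ∈ S, z < v → v < w → f v < capf T B v := by
        intro v hv h1 h2
        rcases Nat.lt_or_ge (f v) (capf T B v) with h | h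
        · exact h
        · exfalso
          have heq : f v = capf T B v := le_antisymm (hfle v hv) h
          by_cases hvT : v ∈ T
          · have := hwmin v hv h1 heq
            omega
          · have := hzmax v hv hvT heq
            omega
      -- new data
      set T' := T.erase w with hT'def
      set B' := B.erase z with hB'def
      -- arithmetic facts about capf after erasing
      have hcapstep : ∀ v ∈ S', ((T'.filter (fun t => t ≤ v)).card ≤ (B'.filter (fun b => b < v)).card
          ∧ f v ≤ capf T' B' v) ∧ (w ≤ v → capf T' B' v = capf T B v) := by
        intro v hv
        obtain ⟨hvne, hvS⟩ := Finset.mem_erase.mp hv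
        have ha' := card_filter_erase hwT (fun t => t ≤ v)
        have hb' := card_filter_erase hzB (fun b => b < v)
        have hab := hpt v hvS
        have hflev := hfle v hvS
        rw [capf] at hflev
        rw [capf, capf, hT'def, hB'def, ha', hb']
        rcases Nat.lt_trichotomy v z with hcase | hcase | hcase
        · -- v < z
          rw [if_neg (by omega), if_neg (by omega)]
          exact ⟨⟨hab, hflev⟩, by omega⟩
        · omega
        · rcases Nat.lt_or_ge v w with hcase2 | hcase2
          · -- z < v < w : strict
            have hstrict := hmid v hvS hcase hcase2
            rw [capf] at hstrict
            have hbpos : 1 ≤ (B.filter (fun b => b < v)).card :=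
              Finset.card_pos.mpr ⟨z, Finset.mem_filter.mpr ⟨hzB, hcase⟩⟩
            rw [if_neg (by omega), if_pos (by omega)]
            constructor
            · constructor
              · omega
              · omega
            · intro h; omega
          · -- w ≤ v
            have hapos : 1 ≤ (T.filter (fun t => t ≤ v)).card :=
              Finset.card_pos.mpr ⟨w, Finset.mem_filter.mpr ⟨hwT, hcase2⟩⟩
            have hbpos : 1 ≤ (B.filter (fun b => b < v)).card :=
              Finset.card_pos.mpr ⟨z, Finset.mem_filter.mpr ⟨hzB, by omega⟩⟩
            rw [if_pos (by omega), if_pos (by omega)]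
            exact ⟨⟨by omega, by omega⟩, fun _ => by omega⟩
      have hV' : Validf S' T' B' f := by
        refine ⟨?_, ?_, ?_, ?_, ?_⟩
        · intro t ht
          obtain ⟨htw, htT⟩ := Finset.mem_erase.mp ht
          exact Finset.mem_erase.mpr ⟨fun h => hzT (by rwa [h] at htT), hTS htT⟩
        · intro b hb
          obtain ⟨hbz, hbB⟩ := Finset.mem_erase.mp hb
          exact Finset.mem_erase.mpr ⟨hbz, hBS hbB⟩
        · rw [hT'def, hB'def, Finset.card_erase_of_mem hwT, Finset.card_erase_of_mem hzB, hcard]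
        · intro v hv; exact ((hcapstep v hv).1).1
        · intro v hv; exact ((hcapstep v hv).1).2
      obtain ⟨L₀, hGL₀, hSL₀, hTL₀, hBL₀, hfL₀⟩ := ih S' T' B' f hS'card hpos' hV'
      have hwS' : w ∈ S' := Finset.mem_erase.mpr ⟨by omega, hwS⟩
      have hL₀ne : L₀ ≠ [] := by
        intro h
        rw [h] at hSL₀
        simp at hSL₀
        exact absurd hSL₀.symm (Finset.ne_empty_of_mem hwS')
      obtain ⟨L₁, y, hLc⟩ := (List.eq_nil_or_concat L₀).resolve_left hL₀ne
      rw [List.concat_eq_append] at hLc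
      have hyS' : y ∈ S' := by
        rw [← hSL₀, hLc]
        exact List.mem_toFinset.mpr (List.mem_append_right _ (List.mem_singleton_self y))
      have hyT' : y ∉ T' := by
        rw [← hTL₀, hLc]
        exact getLast_not_mem_DTl (goodl_append (hLc ▸ hGL₀)).2.1
      have hgy : gstat L₀ y = 0 := by
        rw [hLc]
        exact gstat_append_self (goodl_append (hLc ▸ hGL₀)).2.1
      have hfy : f y = capf T' B' y := by
        have h1 := gstat_fg hGL₀ (List.mem_toFinset.mp (hSL₀ ▸ hyS'))
        rw [hTL₀, hBL₀, hgy] at h1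
        rw [← hfL₀ y hyS']
        omega
      have hyw : y = w := by
        rcases Nat.lt_trichotomy y w with hcase | hcase | hcase
        · exfalso
          -- w would have positive gstat in L₀
          have hwL₁ : w ∈ L₁ := by
            have hwL₀ : w ∈ L₀ := List.mem_toFinset.mp (hSL₀ ▸ hwS')
            rw [hLc] at hwL₀
            rcases List.mem_append.mp hwL₀ with h | h
            · exact h
            · simp at h; omega
          have hpos0 := gstat_pos_of_gt (hLc ▸ hGL₀) hwL₁ hcase
            (by rw [← hLc, hTL₀, hT'def]; exact Finset.notMem_erase w T)
          have hcap'w : capf T' B' w = capf T B w := (hcapstep w hwS').2 (le_refl w)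
          have h1 := gstat_fg hGL₀ (List.mem_toFinset.mp (hSL₀ ▸ hwS'))
          rw [hTL₀, hBL₀] at h1
          have h2 := hfL₀ w hwS'
          rw [← hLc] at hpos0
          omega
        · exact hcase
        · exfalso
          obtain ⟨hyne, hyS⟩ := Finset.mem_erase.mp hyS'
          have hycap : capf T' B' y = capf T B y := (hcapstep y hyS').2 (by omega)
          have hyT : y ∉ T := by
            intro h
            exact hyT' (Finset.mem_erase.mpr ⟨by omega, h⟩)
          have := hzmax y hyS hyT (by rw [← hycap]; exact hfy)
          omega
      subst hyw
      -- assemble L := L₀ ++ [z]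
      have hzL₀ : z ∉ L₀ := by
        intro h
        have := List.mem_toFinset.mpr h
        rw [hSL₀] at this
        exact absurd this (Finset.notMem_erase z S)
      have hlast : L₀.getD (L₀.length - 1) 0 = w := by rw [hLc]; exact getD_last_concat
      have hGL : Goodl (L₀ ++ [z]) := by
        constructor
        · rw [List.nodup_append]
          exact ⟨hGL₀.1, List.nodup_singleton z, fun x hx _ hx2 => by
            simp at hx2
            subst hx2; intro h; subst h; exact hzL₀ hx⟩
        · intro x hx
          rcases List.mem_append.mp hx with h | h
          · exact hGL₀.2 x h
          · simp at h; omega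
      refine ⟨L₀ ++ [z], hGL, ?_, ?_, ?_, ?_⟩
      · rw [toFinset_concat, hSL₀, hS'def, Finset.insert_erase hzS]
      · rw [DTl_append_of_desc hL₀ne (by rw [hlast]; omega), hlast, hTL₀, hT'def,
          Finset.insert_erase hwT]
      · rw [DBl_append_of_desc hL₀ne (by rw [hlast]; omega), hBL₀, hB'def,
          Finset.insert_erase hzB]
      · intro v hv
        by_cases hvz : v = z
        · subst hvz
          rw [fstat_append_self hzL₀, strIdx_card hGL.1,
            DTl_append_of_desc hL₀ne (by rw [hlast]; omega), hlast,
            DBl_append_of_desc hL₀ne (by rw [hlast]; omega), hTL₀, hBL₀, hT'def, hB'def,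
            Finset.insert_erase hwT, Finset.insert_erase hzB]
          omega
        · have hvS' : v ∈ S' := Finset.mem_erase.mpr ⟨hvz, hv⟩
          have hvL₀ : v ∈ L₀ := List.mem_toFinset.mp (hSL₀ ▸ hvS')
          rw [fstat_append hvL₀ hzL₀]
          exact hfL₀ v hvS'
    · -- case: no final descent; z goes at the end after a smaller letter
      have hV' : Validf S' T B f := by
        refine ⟨?_, ?_, hcard, ?_, ?_⟩
        · intro t ht
          exact Finset.mem_erase.mpr ⟨fun h => hzT (by rwa [h] at ht), hTS ht⟩
        · intro b hb
          exact Finset.mem_erase.mpr ⟨fun h => hzB (by rwa [h] at hb), hBS hb⟩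
        · intro v hv; exact hpt v (Finset.mem_of_mem_erase hv)
        · intro v hv; exact hfle v (Finset.mem_of_mem_erase hv)
      obtain ⟨L₀, hGL₀, hSL₀, hTL₀, hBL₀, hfL₀⟩ := ih S' T B f hS'card hpos' hV'
      have hzL₀ : z ∉ L₀ := by
        intro h
        have := List.mem_toFinset.mpr h
        rw [hSL₀] at this
        exact absurd this (Finset.notMem_erase z S)
      have hGL : Goodl (L₀ ++ [z]) := by
        constructor
        · rw [List.nodup_append]
          exact ⟨hGL₀.1, List.nodup_singleton z, fun x hx _ hx2 => by
            simp at hx2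
            subst hx2; intro h; subst h; exact hzL₀ hx⟩
        · intro x hx
          rcases List.mem_append.mp hx with h | h
          · exact hGL₀.2 x h
          · simp at h; omega
      have hno : L₀ = [] ∨ L₀.getD (L₀.length - 1) 0 < z := by
        rcases List.eq_nil_or_concat L₀ with h | ⟨L₁, y, hLc⟩
        · exact Or.inl h
        rw [List.concat_eq_append] at hLc
        right
        have hL₀ne : L₀ ≠ [] := by rw [hLc]; simp
        have hlast : L₀.getD (L₀.length - 1) 0 = y := by rw [hLc]; exact getD_last_concat
        have hyS' : y ∈ S' := by
          rw [← hSL₀, hLc]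
          exact List.mem_toFinset.mpr (List.mem_append_right _ (List.mem_singleton_self y))
        have hyT : y ∉ T := by
          rw [← hTL₀, hLc]
          exact getLast_not_mem_DTl (goodl_append (hLc ▸ hGL₀)).2.1
        have hgy : gstat L₀ y = 0 := by
          rw [hLc]
          exact gstat_append_self (goodl_append (hLc ▸ hGL₀)).2.1
        have hfy : f y = capf T B y := by
          have h1 := gstat_fg hGL₀ (List.mem_toFinset.mp (hSL₀ ▸ hyS'))
          rw [hTL₀, hBL₀, hgy] at h1
          rw [← hfL₀ y hyS']
          omega
        obtain ⟨hyne, hyS⟩ := Finset.mem_erase.mp hyS'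
        have := hzmax y hyS hyT hfy
        rw [hlast]
        omega
      refine ⟨L₀ ++ [z], hGL, ?_, ?_, ?_, ?_⟩
      · rw [toFinset_concat, hSL₀, hS'def, Finset.insert_erase hzS]
      · rw [DTl_append_of_no hno, hTL₀]
      · rw [DBl_append_of_no hno, hBL₀]
      · intro v hv
        by_cases hvz : v = z
        · subst hvz
          rw [fstat_append_self hzL₀, strIdx_card hGL.1, DTl_append_of_no hno,
            DBl_append_of_no hno, hTL₀, hBL₀]
          omega
        · have hvS' : v ∈ S' := Finset.mem_erase.mpr ⟨hvz, hv⟩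
          have hvL₀ : v ∈ L₀ := List.mem_toFinset.mp (hSL₀ ▸ hvS')
          rw [fstat_append hvL₀ hzL₀]
          exact hfL₀ v hvS'


section Transport

variable {n : ℕ}

noncomputable def Wl (σ : Equiv.Perm (Fin n)) : List ℕ :=
  (List.finRange n).map (fun i => (σ i : ℕ) + 1)

lemma Wl_length (σ : Equiv.Perm (Fin n)) : (Wl σ).length = n := by simp [Wl]

lemma Wl_getD (σ : Equiv.Perm (Fin n)) {i : ℕ} (h : i < n) :
    (Wl σ).getD i 0 = (σ ⟨i, h⟩ : ℕ) + 1 := by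
  rw [List.getD_eq_getElem _ 0 (by rw [Wl_length]; exact h)]
  simp [Wl]

lemma entry_eq_getD (σ : Equiv.Perm (Fin n)) {i : ℕ} (h1 : 1 ≤ i) (h2 : i ≤ n) :
    entry σ i = (Wl σ).getD (i - 1) 0 := by
  rw [entry, dif_pos (by omega : i - 1 < n), Wl_getD σ (by omega : i - 1 < n)]

lemma getD_eq_entry (σ : Equiv.Perm (Fin n)) {j : ℕ} (h : j < n) :
    (Wl σ).getD j 0 = entry σ (j + 1) := by
  rw [entry_eq_getD σ (by omega) (by omega)]
  simp

lemma Wl_good (σ : Equiv.Perm (Fin n)) : Goodl (Wl σ) := by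
  constructor
  · apply List.Nodup.map
    · intro a b hab
      simp only at hab
      exact σ.injective (Fin.val_injective (by omega : ((σ a : ℕ)) = (σ b : ℕ)))
    · exact List.nodup_finRange n
  · intro x hx
    simp only [Wl, List.mem_map] at hx
    obtain ⟨a, _, rfl⟩ := hx
    omega

lemma Wl_toFinset (σ : Equiv.Perm (Fin n)) : (Wl σ).toFinset = Finset.Icc 1 n := by
  ext x
  simp only [Wl, List.mem_toFinset, List.mem_map, List.mem_finRange, Finset.mem_Icc]
  constructor
  · rintro ⟨a, _, rfl⟩
    have := a.isLt
    have := (σ a).isLt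
    omega
  · rintro ⟨h1, h2⟩
    refine ⟨σ.symm ⟨x - 1, by omega⟩, ⟨by simp, ?_⟩⟩
    rw [Equiv.apply_symm_apply]
    simp
    omega

lemma mem_dIdx_Wl (σ : Equiv.Perm (Fin n)) {j : ℕ} :
    j ∈ dIdx (Wl σ) ↔ (j + 1) ∈ Des σ := by
  rw [mem_dIdx, Des, Finset.mem_filter, Finset.mem_Icc, Wl_length]
  constructor
  · rintro ⟨h1, h2⟩
    rw [getD_eq_entry σ (by omega), getD_eq_entry σ (by omega)] at h2
    exact ⟨⟨by omega, by omega⟩, by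
      have : j + 1 + 1 = j + 2 := rfl
      rw [this]; exact h2⟩
  · rintro ⟨⟨h1, h2⟩, h3⟩
    have hj1 : j + 1 < n := by omega
    constructor
    · omega
    · rw [getD_eq_entry σ (by omega), getD_eq_entry σ (by omega)]
      exact h3

lemma Destop_eq (σ : Equiv.Perm (Fin n)) : Destop σ = DTl (Wl σ) := by
  ext x
  simp only [Destop, DTl, Finset.mem_image]
  constructor
  · rintro ⟨i, hi, rfl⟩
    have hi' : 1 ≤ i ∧ i ≤ n - 1 := Finset.mem_Icc.mp (Finset.mem_filter.mp hi).1
    refine ⟨i - 1, ?_, ?_⟩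
    · rw [mem_dIdx_Wl]
      have : i - 1 + 1 = i := by omega
      rw [this]; exact hi
    · rw [← entry_eq_getD σ (by omega) (by omega)]
  · rintro ⟨j, hj, rfl⟩
    have hj' := mem_dIdx.mp hj
    rw [Wl_length] at hj'
    refine ⟨j + 1, (mem_dIdx_Wl σ).mp hj, ?_⟩
    rw [entry_eq_getD σ (by omega) (by omega)]
    simp

lemma Desbot_eq (σ : Equiv.Perm (Fin n)) : Desbot σ = DBl (Wl σ) := by
  ext x
  simp only [Desbot, DBl, Finset.mem_image]
  constructor
  · rintro ⟨i, hi, rfl⟩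
    have hi' : 1 ≤ i ∧ i ≤ n - 1 := Finset.mem_Icc.mp (Finset.mem_filter.mp hi).1
    refine ⟨i - 1, ?_, ?_⟩
    · rw [mem_dIdx_Wl]
      have : i - 1 + 1 = i := by omega
      rw [this]; exact hi
    · have h1 : i - 1 + 1 = i := by omega
      rw [h1]
      exact getD_eq_entry σ (by omega)
  · rintro ⟨j, hj, rfl⟩
    have hj' := mem_dIdx.mp hj
    rw [Wl_length] at hj'
    refine ⟨j + 1, (mem_dIdx_Wl σ).mp hj, ?_⟩
    exact (getD_eq_entry σ (by omega)).symm

lemma entry_mem_Icc (σ : Equiv.Perm (Fin n)) {i : ℕ} (h1 : 1 ≤ i) (h2 : i ≤ n) :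
    entry σ i ∈ Finset.Icc 1 n := by
  rw [entry, dif_pos (by omega : i - 1 < n), Finset.mem_Icc]
  have := (σ ⟨i - 1, by omega⟩).isLt
  omega


lemma occ31_2_eq (σ : Equiv.Perm (Fin n)) :
    occ31_2 σ = ∑ v ∈ Finset.Icc 1 n, fstat (Wl σ) v := by
  rw [occ31_2]
  rw [Finset.card_eq_sum_card_fiberwise
    (f := fun p => entry σ p.2) (t := Finset.Icc 1 n) (by
      intro p hp
      have hp2 := (Finset.mem_product.mp (Finset.mem_filter.mp hp).1).2
      rw [Finset.mem_Icc] at hp2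
      exact entry_mem_Icc σ hp2.1 hp2.2)]
  apply Finset.sum_congr rfl
  intro v hv
  rw [Finset.mem_Icc] at hv
  have hW := Wl_good σ
  have hlen := Wl_length σ
  have hvW : v ∈ Wl σ := by
    rw [← List.mem_toFinset, Wl_toFinset]
    exact Finset.mem_Icc.mpr hv
  have hk : List.idxOf v (Wl σ) < n := by
    have := indexOf_lt hvW
    rw [hlen] at this
    exact this
  have hgk : (Wl σ).getD (List.idxOf v (Wl σ)) 0 = v := getD_indexOf hvW
  rw [fstat]
  refine Finset.card_bij' (fun p _ => p.1 - 1)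
    (fun i _ => (i + 1, List.idxOf v (Wl σ) + 1)) ?_ ?_ ?_ ?_
  · intro p hp
    simp only [Finset.mem_filter, Finset.mem_product, Finset.mem_Icc] at hp
    obtain ⟨⟨⟨⟨h11, h12⟩, h21, h22⟩, hc1, hc2, hc3, hc4⟩, hfib⟩ := hp
    have e1 : entry σ p.1 = (Wl σ).getD (p.1 - 1) 0 := entry_eq_getD σ (by omega) (by omega)
    have e2 : entry σ (p.1 + 1) = (Wl σ).getD p.1 0 := by
      rw [entry_eq_getD σ (by omega) (by omega)]; simp
    have e3 : entry σ p.2 = (Wl σ).getD (p.2 - 1) 0 := entry_eq_getD σ (by omega) (by omega)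
    have hkp : List.idxOf v (Wl σ) = p.2 - 1 :=
      indexOf_eq hW.1 (by rw [hlen]; omega) (by rw [← e3, hfib])
    have hre : p.1 - 1 + 1 = p.1 := by omega
    refine Finset.mem_filter.mpr ⟨Finset.mem_filter.mpr ⟨mem_dIdx.mpr ⟨?_, ?_⟩, ?_, ?_⟩, ?_⟩
    · rw [hlen]; omega
    · rw [hre, ← e2, ← e1]; exact hc2
    · rw [hre, ← e2, ← hfib]; exact hc3
    · rw [← e1, ← hfib]; exact hc4
    · rw [hkp]; omega
  · intro i hi
    simp only [Finset.mem_filter] at hi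
    obtain ⟨hstr, hlt⟩ := hi
    simp only [strIdx, Finset.mem_filter] at hstr
    obtain ⟨hid, hb1, hb2⟩ := hstr
    have hidx := mem_dIdx.mp hid
    rw [hlen] at hidx
    have e1 : entry σ (i + 1) = (Wl σ).getD i 0 := (getD_eq_entry σ (by omega)).symm
    have e2 : entry σ (i + 1 + 1) = (Wl σ).getD (i + 1) 0 := (getD_eq_entry σ (by omega)).symm
    have e3 : entry σ (List.idxOf v (Wl σ) + 1) = v := by
      rw [(getD_eq_entry σ (by omega : List.idxOf v (Wl σ) < n)).symm.symm] at hgk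
      exact hgk
    simp only [Finset.mem_filter, Finset.mem_product, Finset.mem_Icc]
    refine ⟨⟨⟨⟨by omega, by omega⟩, by omega, by omega⟩, by omega, ?_, ?_, ?_⟩, e3⟩
    · rw [e1, e2]; exact hidx.2
    · rw [e2, e3]; exact hb1
    · rw [e1, e3]; exact hb2
  · intro p hp
    simp only [Finset.mem_filter, Finset.mem_product, Finset.mem_Icc] at hp
    obtain ⟨⟨⟨⟨h11, h12⟩, h21, h22⟩, hc1, hc2, hc3, hc4⟩, hfib⟩ := hp
    have e3 : entry σ p.2 = (Wl σ).getD (p.2 - 1) 0 := entry_eq_getD σ (by omega) (by omega)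
    have hkp : List.idxOf v (Wl σ) = p.2 - 1 :=
      indexOf_eq hW.1 (by rw [hlen]; omega) (by rw [← e3, hfib])
    have : p.1 - 1 + 1 = p.1 := by omega
    rw [this, hkp]
    have : p.2 - 1 + 1 = p.2 := by omega
    rw [this]
  · intro i hi
    simp

lemma occ2_31_eq (σ : Equiv.Perm (Fin n)) :
    occ2_31 σ = ∑ v ∈ Finset.Icc 1 n, gstat (Wl σ) v := by
  rw [occ2_31]
  rw [Finset.card_eq_sum_card_fiberwise
    (f := fun p => entry σ p.1) (t := Finset.Icc 1 n) (by
      intro p hp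
      have hp1 := (Finset.mem_product.mp (Finset.mem_filter.mp hp).1).1
      rw [Finset.mem_Icc] at hp1
      exact entry_mem_Icc σ hp1.1 (by omega))]
  apply Finset.sum_congr rfl
  intro v hv
  rw [Finset.mem_Icc] at hv
  have hW := Wl_good σ
  have hlen := Wl_length σ
  have hvW : v ∈ Wl σ := by
    rw [← List.mem_toFinset, Wl_toFinset]
    exact Finset.mem_Icc.mpr hv
  have hk : List.idxOf v (Wl σ) < n := by
    have := indexOf_lt hvW
    rw [hlen] at this
    exact this
  have hgk : (Wl σ).getD (List.idxOf v (Wl σ)) 0 = v := getD_indexOf hvW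
  rw [gstat]
  refine Finset.card_bij' (fun p _ => p.2 - 1)
    (fun i _ => (List.idxOf v (Wl σ) + 1, i + 1)) ?_ ?_ ?_ ?_
  · intro p hp
    simp only [Finset.mem_filter, Finset.mem_product, Finset.mem_Icc] at hp
    obtain ⟨⟨⟨⟨h11, h12⟩, h21, h22⟩, hc1, hc2, hc3, hc4⟩, hfib⟩ := hp
    have e1 : entry σ p.2 = (Wl σ).getD (p.2 - 1) 0 := entry_eq_getD σ (by omega) (by omega)
    have e2 : entry σ (p.2 + 1) = (Wl σ).getD p.2 0 := by
      rw [entry_eq_getD σ (by omega) (by omega)]; simp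
    have e3 : entry σ p.1 = (Wl σ).getD (p.1 - 1) 0 := entry_eq_getD σ (by omega) (by omega)
    have hkp : List.idxOf v (Wl σ) = p.1 - 1 :=
      indexOf_eq hW.1 (by rw [hlen]; omega) (by rw [← e3, hfib])
    have hre : p.2 - 1 + 1 = p.2 := by omega
    refine Finset.mem_filter.mpr ⟨Finset.mem_filter.mpr ⟨mem_dIdx.mpr ⟨?_, ?_⟩, ?_, ?_⟩, ?_⟩
    · rw [hlen]; omega
    · rw [hre, ← e2, ← e1]; exact hc2
    · rw [hre, ← e2, ← hfib]; exact hc3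
    · rw [← e1, ← hfib]; exact hc4
    · rw [hkp]; omega
  · intro i hi
    simp only [Finset.mem_filter] at hi
    obtain ⟨hstr, hlt⟩ := hi
    simp only [strIdx, Finset.mem_filter] at hstr
    obtain ⟨hid, hb1, hb2⟩ := hstr
    have hidx := mem_dIdx.mp hid
    rw [hlen] at hidx
    have e1 : entry σ (i + 1) = (Wl σ).getD i 0 := (getD_eq_entry σ (by omega)).symm
    have e2 : entry σ (i + 1 + 1) = (Wl σ).getD (i + 1) 0 := (getD_eq_entry σ (by omega)).symm
    have e3 : entry σ (List.idxOf v (Wl σ) + 1) = v := by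
      rw [(getD_eq_entry σ (by omega : List.idxOf v (Wl σ) < n)).symm.symm] at hgk
      exact hgk
    simp only [Finset.mem_filter, Finset.mem_product, Finset.mem_Icc]
    refine ⟨⟨⟨⟨by omega, by omega⟩, by omega, by omega⟩, by omega, ?_, ?_, ?_⟩, e3⟩
    · rw [e1, e2]; exact hidx.2
    · rw [e2, e3]; exact hb1
    · rw [e3, e1]; exact hb2
  · intro p hp
    simp only [Finset.mem_filter, Finset.mem_product, Finset.mem_Icc] at hp
    obtain ⟨⟨⟨⟨h11, h12⟩, h21, h22⟩, hc1, hc2, hc3, hc4⟩, hfib⟩ := hp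
    have e3 : entry σ p.1 = (Wl σ).getD (p.1 - 1) 0 := entry_eq_getD σ (by omega) (by omega)
    have hkp : List.idxOf v (Wl σ) = p.1 - 1 :=
      indexOf_eq hW.1 (by rw [hlen]; omega) (by rw [← e3, hfib])
    rw [hkp]
    have h1 : p.1 - 1 + 1 = p.1 := by omega
    have h2 : p.2 - 1 + 1 = p.2 := by omega
    rw [h1, h2]
  · intro i hi
    simp

lemma exists_perm_of {L : List ℕ} (hG : Goodl L) (hS : L.toFinset = Finset.Icc 1 n) :
    ∃ τ : Equiv.Perm (Fin n), Wl τ = L := by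
  have hlen : L.length = n := by
    rw [← List.toFinset_card_of_nodup hG.1, hS, Nat.card_Icc]
    omega
  have hbound : ∀ i : Fin n, L.getD (i : ℕ) 0 - 1 < n := by
    intro i
    have hmem : L.getD (i : ℕ) 0 ∈ L := getD_mem (by omega)
    have := Finset.mem_Icc.mp (hS ▸ List.mem_toFinset.mpr hmem)
    omega
  set g : Fin n → Fin n := fun i => ⟨L.getD (i : ℕ) 0 - 1, hbound i⟩ with hg
  have hpos : ∀ i : Fin n, 0 < L.getD (i : ℕ) 0 := by
    intro i
    exact hG.2 _ (getD_mem (by omega))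
  have hinj : Function.Injective g := by
    intro i j hij
    have h1 : L.getD (i : ℕ) 0 - 1 = L.getD (j : ℕ) 0 - 1 := congrArg Fin.val hij
    have h2 : L.getD (i : ℕ) 0 = L.getD (j : ℕ) 0 := by
      have := hpos i; have := hpos j; omega
    exact Fin.val_injective (getD_inj hG.1 (by omega) (by omega) h2)
  refine ⟨Equiv.ofBijective g (Finite.injective_iff_bijective.mp hinj), ?_⟩
  apply List.ext_getElem (by rw [Wl_length, hlen])
  intro i h1 h2
  have hi : i < n := by rw [Wl_length] at h1; exact h1
  have hW : (Wl (Equiv.ofBijective g (Finite.injective_iff_bijective.mp hinj)))[i] =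
      ((Equiv.ofBijective g (Finite.injective_iff_bijective.mp hinj)) (⟨i, hi⟩ : Fin n) : ℕ) + 1 := by
    simp [Wl]
  have hg2 : ((Equiv.ofBijective g (Finite.injective_iff_bijective.mp hinj)) ⟨i, hi⟩ : ℕ)
      = L.getD i 0 - 1 := rfl
  rw [hW, hg2, ← List.getD_eq_getElem L 0 h2]
  have hp2 : 0 < L.getD i 0 := hpos ⟨i, hi⟩
  omega

lemma Wl_injective {σ τ : Equiv.Perm (Fin n)} (h : Wl σ = Wl τ) : σ = τ := by
  apply Equiv.ext
  intro i
  have h1 : (Wl σ).getD (i : ℕ) 0 = (Wl τ).getD (i : ℕ) 0 := by rw [h]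
  rw [Wl_getD σ i.isLt, Wl_getD τ i.isLt] at h1
  simp only [Fin.eta] at h1
  exact Fin.val_injective (by omega)


lemma swap_core (T B : Finset ℕ) (σ : Equiv.Perm (Fin n))
    (hσT : Destop σ = T) (hσB : Desbot σ = B) :
    ∃ τ : Equiv.Perm (Fin n), Destop τ = T ∧ Desbot τ = B ∧
      occ2_31 τ = occ31_2 σ ∧ occ31_2 τ = occ2_31 σ ∧
      (∀ v ∈ Finset.Icc 1 n, fstat (Wl τ) v = capf T B v - fstat (Wl σ) v) := by
  have hW := Wl_good σ
  have hS := Wl_toFinset σ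
  have hTW : DTl (Wl σ) = T := by rw [← Destop_eq, hσT]
  have hBW : DBl (Wl σ) = B := by rw [← Desbot_eq, hσB]
  have hval := data_valid hW
  rw [hS, hTW, hBW] at hval
  obtain ⟨h1, h2, h3, h4, h5⟩ := hval
  have hval' : Validf (Finset.Icc 1 n) T B (fun v => capf T B v - fstat (Wl σ) v) :=
    ⟨h1, h2, h3, h4, fun v _ => Nat.sub_le _ _⟩
  have hpos : ∀ x ∈ Finset.Icc 1 n, 0 < x := fun x hx => (Finset.mem_Icc.mp hx).1
  obtain ⟨L, hGL, hSL, hTL, hBL, hfL⟩ :=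
    core_exists (Finset.Icc 1 n).card (Finset.Icc 1 n) T B
      (fun v => capf T B v - fstat (Wl σ) v) le_rfl hpos hval'
  obtain ⟨τ, hτ⟩ := exists_perm_of hGL hSL
  have hWτ := Wl_good τ
  have hDT : DTl (Wl τ) = T := by rw [hτ, hTL]
  have hDB : DBl (Wl τ) = B := by rw [hτ, hBL]
  have key : ∀ v ∈ Finset.Icc 1 n, fstat (Wl σ) v + gstat (Wl σ) v = capf T B v := by
    intro v hv
    have := gstat_fg hW (by rw [← List.mem_toFinset, hS]; exact hv)
    rwa [hTW, hBW] at this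
  have keyτ : ∀ v ∈ Finset.Icc 1 n, fstat (Wl τ) v + gstat (Wl τ) v = capf T B v := by
    intro v hv
    have := gstat_fg hWτ (by
      rw [← List.mem_toFinset, hτ, hSL]; exact hv)
    rwa [hDT, hDB] at this
  have hfτ : ∀ v ∈ Finset.Icc 1 n, fstat (Wl τ) v = capf T B v - fstat (Wl σ) v := by
    intro v hv
    rw [hτ]
    exact hfL v hv
  refine ⟨τ, by rw [Destop_eq, hDT], by rw [Desbot_eq, hDB], ?_, ?_, hfτ⟩
  · rw [occ2_31_eq, occ31_2_eq]
    apply Finset.sum_congr rfl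
    intro v hv
    have k1 := key v hv
    have k2 := keyτ v hv
    have k3 := hfτ v hv
    omega
  · rw [occ31_2_eq, occ2_31_eq]
    apply Finset.sum_congr rfl
    intro v hv
    have k1 := key v hv
    have k2 := keyτ v hv
    have k3 := hfτ v hv
    omega

lemma occ_card_le (T B : Finset ℕ) (a b : ℕ) :
    ((Finset.univ : Finset (Equiv.Perm (Fin n))).filter
        (fun σ => Destop σ = T ∧ Desbot σ = B ∧ occ2_31 σ = a ∧ occ31_2 σ = b)).card ≤
      ((Finset.univ : Finset (Equiv.Perm (Fin n))).filter
        (fun σ => Destop σ = T ∧ Desbot σ = B ∧ occ2_31 σ = b ∧ occ31_2 σ = a)).card := by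
  classical
  apply Finset.card_le_card_of_injOn
    (fun σ => if h : Destop σ = T ∧ Desbot σ = B then
      Classical.choose (swap_core T B σ h.1 h.2) else σ)
  · intro σ hσ
    simp only [Finset.mem_coe, Finset.mem_filter, Finset.mem_univ, true_and] at hσ
    obtain ⟨hT, hB, ha, hb⟩ := hσ
    beta_reduce
    rw [dif_pos (show Destop σ = T ∧ Desbot σ = B from ⟨hT, hB⟩)]
    obtain ⟨p1, p2, p3, p4, p5⟩ := Classical.choose_spec (swap_core T B σ hT hB)
    simp only [Finset.mem_coe, Finset.mem_filter, Finset.mem_univ, true_and]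
    exact ⟨p1, p2, by rw [p3, hb], by rw [p4, ha]⟩
  · intro σ₁ hσ₁ σ₂ hσ₂ heq
    simp only [Finset.coe_filter, Set.mem_setOf_eq, Finset.mem_univ, true_and] at hσ₁ hσ₂
    obtain ⟨hT1, hB1, _, _⟩ := hσ₁
    obtain ⟨hT2, hB2, _, _⟩ := hσ₂
    simp only at heq
    rw [dif_pos ⟨hT1, hB1⟩, dif_pos ⟨hT2, hB2⟩] at heq
    obtain ⟨q1, q2, q3, q4, q5⟩ := Classical.choose_spec (swap_core T B σ₁ hT1 hB1)
    obtain ⟨r1, r2, r3, r4, r5⟩ := Classical.choose_spec (swap_core T B σ₂ hT2 hB2)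
    -- fstat of the images agree, hence fstat of σ₁, σ₂ agree
    have hf12 : ∀ v ∈ Finset.Icc 1 n, fstat (Wl σ₁) v = fstat (Wl σ₂) v := by
      intro v hv
      have e1 := q5 v hv
      have e2 := r5 v hv
      rw [heq] at e1
      have hle1 : fstat (Wl σ₁) v ≤ capf T B v := by
        have := fstat_le (Wl_good σ₁) v
        rwa [← Destop_eq, ← Desbot_eq, hT1, hB1] at this
      have hle2 : fstat (Wl σ₂) v ≤ capf T B v := by
        have := fstat_le (Wl_good σ₂) v
        rwa [← Destop_eq, ← Desbot_eq, hT2, hB2] at this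
      omega
    apply Wl_injective
    apply core_unique (Wl σ₁).length (Wl σ₁) (Wl σ₂) le_rfl (Wl_good σ₁) (Wl_good σ₂)
    · rw [Wl_toFinset, Wl_toFinset]
    · rw [← Destop_eq, ← Destop_eq, hT1, hT2]
    · rw [← Desbot_eq, ← Desbot_eq, hB1, hB2]
    · intro v hv
      rw [Wl_toFinset] at hv
      exact hf12 v hv

end Transport

end PF

/-- The pairs of statistics `(2-31, 31-2)` and `(31-2, 2-31)` are jointly
equidistributed on permutations of `[n]` with fixed descent top set and descent bottom set. -/
theorem occ_pair_equidistributed (n : ℕ) (T B : Finset ℕ)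
    (hT : T ⊆ Finset.Icc 1 n) (hB : B ⊆ Finset.Icc 1 n) (a b : ℕ) :
    ((Finset.univ : Finset (Equiv.Perm (Fin n))).filter
        (fun σ => Destop σ = T ∧ Desbot σ = B ∧ occ2_31 σ = a ∧ occ31_2 σ = b)).card =
      ((Finset.univ : Finset (Equiv.Perm (Fin n))).filter
        (fun σ => Destop σ = T ∧ Desbot σ = B ∧ occ2_31 σ = b ∧ occ31_2 σ = a)).card := by
  exact le_antisymm (PF.occ_card_le T B a b) (PF.occ_card_le T B b a)
end
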